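/- arXiv:1903.01098 — 7 statements merged into one kernel-verified Lean document; each statement's English description precedes it below -/
import Mathlib

section
/- For an odd prime p = 2n+1, the product over 1 ≤ i < j ≤ n of (j² - i²) is congruent to -n! modulo p if p ≡ 1 (mod 4), and congruent to 1 modulo p if p ≡ 3 (mod 4). -/
open Finset

lemma auxIcc (j : ℕ) (hj : 1 ≤ j) : Icc 1 (j-1) = Ico 1 j := by
  rw [← Finset.Ico_add_one_right_eq_Icc]; congr 1; omega

lemma auxN1 (j : ℕ) (hj : 1 ≤ j) : ∏ i ∈ Icc 1 (j-1), (j - i) = (j-1).factorial := by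
  rw [auxIcc j hj, prod_Ico_eq_prod_range, ← Finset.prod_range_reflect,
    ← Finset.prod_range_add_one_eq_factorial (j-1)]
  apply Finset.prod_congr rfl
  intro k hk; simp only [mem_range] at hk; omega

lemma auxN2 (j : ℕ) (hj : 1 ≤ j) :
    j.factorial * ∏ i ∈ Icc 1 (j-1), (j + i) = (2*j - 1).factorial := by
  have h1 : (2*j-1).factorial = ∏ x ∈ Ico 1 (2*j), x := by
    rw [← Finset.prod_Ico_id_eq_factorial (2*j-1), show 2*j-1+1 = 2*j by omega]
  have h4 : (1:ℕ) ≤ j + 1 := by omega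
  have h5 : j + 1 ≤ 2*j := by omega
  rw [h1, ← Finset.prod_Ico_consecutive (fun x => x) h4 h5]
  rw [← Finset.prod_Ico_id_eq_factorial j]
  congr 1
  rw [auxIcc j hj, prod_Ico_eq_prod_range, prod_Ico_eq_prod_range]
  apply Finset.prod_congr (by congr 1 ; omega)
  intro k hk; simp only [mem_range] at hk; omega

lemma auxN3 (j : ℕ) (hj : 1 ≤ j) :
    j * ∏ i ∈ Icc 1 (j-1), ((j - i) * (j + i)) = (2*j - 1).factorial := by
  rw [Finset.prod_mul_distrib, auxN1 j hj, ← mul_assoc, Nat.mul_factorial_pred (by omega),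
    auxN2 j hj]

lemma auxB (p : ℕ) (hp : p.Prime) [Fact p.Prime] (hodd : p % 2 = 1) (k : ℕ) (hk : k ≤ p - 1) :
    ((k.factorial : ZMod p)) * ((p - 1 - k).factorial : ZMod p) = (-1) ^ (k + 1) := by
  have hp1 : 1 ≤ p := hp.one_lt.le
  set m := p - 1 - k with hm
  have h1 : (p - 1).factorial = k.factorial * ∏ i ∈ Ico (k+1) p, i := by
    rw [← Finset.prod_Ico_id_eq_factorial k, Finset.prod_Ico_consecutive (fun x => x)
      (by omega : 1 ≤ k+1) (by omega : k+1 ≤ p),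
      ← Finset.prod_Ico_id_eq_factorial (p-1), show p-1+1 = p by omega]
  have h2 : (∏ i ∈ Ico (k+1) p, (i : ZMod p)) = (-1) ^ m * (m.factorial : ZMod p) := by
    rw [prod_Ico_eq_prod_range]
    have hcard : p - (k+1) = m := by omega
    rw [hcard, ← Finset.prod_range_reflect]
    have he : ∀ t ∈ range m, ((k + 1 + (m - 1 - t) : ℕ) : ZMod p) = -((t+1 : ℕ) : ZMod p) := by
      intro t ht
      simp only [mem_range] at ht
      rw [show k + 1 + (m - 1 - t) = p - (t+1) by omega, Nat.cast_sub (by omega : t+1 ≤ p)]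
      simp
    calc ∏ t ∈ range m, ((k + 1 + (m - 1 - t) : ℕ) : ZMod p)
        = ∏ t ∈ range m, ((-1) * ((t+1 : ℕ) : ZMod p)) := by
          refine Finset.prod_congr rfl fun t ht => ?_
          rw [he t ht]; ring
      _ = (∏ _t ∈ range m, (-1 : ZMod p)) * ∏ t ∈ range m, ((t+1 : ℕ) : ZMod p) :=
          Finset.prod_mul_distrib
      _ = (-1) ^ m * (m.factorial : ZMod p) := by
          rw [prod_const, card_range, ← Nat.cast_prod]
          norm_num
  have hw : ((p-1).factorial : ZMod p) = -1 := ZMod.wilsons_lemma p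
  rw [h1] at hw
  push_cast at hw
  rw [h2] at hw
  have hsign : ((-1 : ZMod p) ^ m) * ((-1 : ZMod p) ^ m) = 1 := by
    rw [← pow_add, ← two_mul, pow_mul]; simp
  have key : (k.factorial : ZMod p) * (m.factorial : ZMod p) = (-1)^(m+1) := by
    linear_combination ((-1 : ZMod p)^m) * hw -
      ((k.factorial : ZMod p) * (m.factorial : ZMod p)) * hsign
  rw [key]
  rcases Nat.even_or_odd (k+1) with h | h
  · have h' : Even (m+1) := by
      rw [Nat.even_iff] at h ⊢; omega
    rw [h.neg_one_pow, h'.neg_one_pow]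
  · have h' : Odd (m+1) := by
      rw [Nat.odd_iff] at h ⊢; omega
    rw [h.neg_one_pow, h'.neg_one_pow]
open Finset

lemma auxRefl {K : Type*} [CommMonoid K] (f : ℕ → K) (a b n : ℕ) (hab : a + b = n) :
    ∏ j ∈ Ioc a n, f j = ∏ j ∈ Ioc 0 b, f (n + 1 - j) := by
  refine Finset.prod_nbij' (fun j => n + 1 - j) (fun j => n + 1 - j)
    (fun x hx => ?_) (fun x hx => ?_) (fun x hx => ?_) (fun x hx => ?_) (fun x hx => ?_) <;>
    simp only [mem_Ioc] at hx ⊢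
  · omega
  · omega
  · omega
  · omega
  · congr 1; omega

lemma auxC (p n : ℕ) (hp : p.Prime) [Fact p.Prime] (hpn : p = 2 * n + 1) :
    (∏ j ∈ Icc 1 n, (((2*j-1).factorial : ZMod p))) =
      if n % 2 = 0 then 1 else (n.factorial : ZMod p) := by
  set f : ℕ → ZMod p := fun j => ((2*j-1).factorial : ZMod p) with hf
  have hpair : ∀ j, 1 ≤ j → j ≤ n → f j * f (n + 1 - j) = 1 := by
    intro j h1 h2
    have hb := auxB p hp (by omega) (2*j-1) (by omega)
    rw [show p - 1 - (2*j-1) = 2*(n+1-j)-1 by omega] at hb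
    rw [hf]; dsimp only
    rw [hb, show 2*j-1+1 = 2*j by omega]
    exact (even_two_mul j).neg_one_pow
  have hIcc : Icc 1 n = Ioc 0 n := Finset.Icc_add_one_left_eq_Ioc 0 n
  rcases Nat.even_or_odd n with he | ho
  · obtain ⟨m, hm⟩ := he
    have hm' : n = 2*m := by omega
    rw [if_pos (by omega), hIcc,
      ← Finset.prod_Ioc_consecutive f (Nat.zero_le m) (by omega : m ≤ n),
      auxRefl f m m n (by omega), ← Finset.prod_mul_distrib]
    rw [Finset.prod_congr rfl (fun j hj => by
      simp only [mem_Ioc] at hj; exact hpair j (by omega) (by omega))]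
    exact Finset.prod_const_one
  · obtain ⟨m, hm⟩ := ho
    rw [if_neg (by omega), hIcc,
      ← Finset.prod_Ioc_consecutive f (Nat.zero_le m) (by omega : m ≤ n),
      ← Finset.prod_Ioc_consecutive f (by omega : m ≤ m+1) (by omega : m+1 ≤ n),
      Nat.Ioc_succ_singleton, prod_singleton,
      auxRefl f (m+1) m n (by omega)]
    have h1 : (∏ j ∈ Ioc 0 m, f j) * ∏ j ∈ Ioc 0 m, f (n+1-j) = 1 := by
      rw [← Finset.prod_mul_distrib,
        Finset.prod_congr rfl (fun j hj => by
          simp only [mem_Ioc] at hj; exact hpair j (by omega) (by omega))]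
      exact Finset.prod_const_one
    calc (∏ j ∈ Ioc 0 m, f j) * (f (m+1) * ∏ j ∈ Ioc 0 m, f (n+1-j))
        = f (m+1) * ((∏ j ∈ Ioc 0 m, f j) * ∏ j ∈ Ioc 0 m, f (n+1-j)) := by ring
      _ = f (m+1) := by rw [h1, mul_one]
      _ = (n.factorial : ZMod p) := by rw [hf]; dsimp only; rw [show 2*(m+1)-1 = n by omega]

lemma auxA (p n : ℕ) :
    (n.factorial : ZMod p) *
      ∏ j ∈ Icc 1 n, ∏ i ∈ Icc 1 (j - 1), ((j : ZMod p) ^ 2 - (i : ZMod p) ^ 2) =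
    ∏ j ∈ Icc 1 n, ((2 * j - 1).factorial : ZMod p) := by
  have hfac : (n.factorial : ZMod p) = ∏ j ∈ Icc 1 n, (j : ZMod p) := by
    rw [← Nat.cast_prod, ← Finset.Ico_add_one_right_eq_Icc, Finset.prod_Ico_id_eq_factorial]
  rw [hfac, ← Finset.prod_mul_distrib]
  refine Finset.prod_congr rfl fun j hj => ?_
  simp only [mem_Icc] at hj
  have hinner : (∏ i ∈ Icc 1 (j - 1), ((j : ZMod p) ^ 2 - (i : ZMod p) ^ 2)) =
      ((∏ i ∈ Icc 1 (j - 1), ((j - i) * (j + i)) : ℕ) : ZMod p) := by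
    rw [Nat.cast_prod]
    refine Finset.prod_congr rfl fun i hi => ?_
    simp only [mem_Icc] at hi
    push_cast [Nat.cast_sub (show i ≤ j by omega)]
    ring
  rw [hinner, ← Nat.cast_mul, auxN3 j (by omega)]

theorem stmt_0 (p n : ℕ) (hp : p.Prime) (hpn : p = 2 * n + 1) (hn : 1 ≤ n) :
    (∏ j ∈ Finset.Icc 1 n, ∏ i ∈ Finset.Icc 1 (j - 1), ((j : ℤ) ^ 2 - (i : ℤ) ^ 2)) ≡
      (if p % 4 = 1 then -(n.factorial : ℤ) else 1) [ZMOD p] := by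
  haveI : Fact p.Prime := ⟨hp⟩
  rw [← ZMod.intCast_eq_intCast_iff]
  have hA := auxA p n
  rw [auxC p n hp hpn] at hA
  have hnf : (n.factorial : ZMod p) ≠ 0 := by
    rw [Ne, ZMod.natCast_eq_zero_iff, hp.dvd_factorial]
    omega
  by_cases h4 : p % 4 = 1
  · rw [if_pos h4]
    have hne : n % 2 = 0 := by omega
    rw [if_pos hne] at hA
    have hsq : (n.factorial : ZMod p) * (n.factorial : ZMod p) = -1 := by
      have hb := auxB p hp (by omega) n (by omega)
      rw [show p - 1 - n = n by omega] at hb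
      rw [hb]
      exact (by rw [Nat.odd_iff]; omega : Odd (n+1)).neg_one_pow
    push_cast
    refine mul_left_cancel₀ hnf (hA.trans ?_)
    rw [show (1 : ZMod p) = -(-1) by ring, ← hsq]
    ring
  · rw [if_neg h4]
    have hno : ¬ (n % 2 = 0) := by omega
    rw [if_neg hno] at hA
    push_cast
    exact mul_left_cancel₀ hnf (hA.trans (mul_one _).symm)
end

section
/- Let p = 2n+1 > 3 be a prime and ζ = e^(2πi/(p-1)). Then the square of the product over 1 ≤ i < j ≤ n of (ζ^(2j) - ζ^(2i)) equals n^n · (-1)^((n²+n+2)/2). -/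
open Polynomial Finset

private lemma myNegOnePow (a b : ℕ) (h : a % 2 = b % 2) : (-1 : ℂ) ^ a = (-1) ^ b := by
  have key : ∀ k : ℕ, (-1 : ℂ) ^ k = (-1) ^ (k % 2) := by
    intro k
    conv_lhs => rw [← Nat.div_add_mod k 2]
    rw [pow_add, pow_mul]
    simp
  rw [key a, key b, h]

private lemma myL1 {n : ℕ} (hn : 0 < n) {ω : ℂ} (hω : IsPrimitiveRoot ω n) :
    ∏ d ∈ Finset.Icc 1 (n - 1), (1 - ω ^ d) = n := by
  have hroots : ((X : ℂ[X]) ^ n - C 1).roots = (Multiset.range n).map (ω ^ ·) := by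
    have h0 : ((X : ℂ[X]) ^ n - C 1).roots = Polynomial.nthRoots n (1 : ℂ) := rfl
    rw [h0]
    simpa using hω.nthRoots_eq (one_pow n)
  have hmonic : ((X : ℂ[X]) ^ n - C 1).Monic := monic_X_pow_sub_C 1 hn.ne'
  have hcard : ((X : ℂ[X]) ^ n - C 1).roots.card = ((X : ℂ[X]) ^ n - C 1).natDegree := by
    rw [natDegree_X_pow_sub_C, hroots]; simp
  have hfac := prod_multiset_X_sub_C_of_monic_of_roots_card_eq hmonic hcard
  rw [hroots, Multiset.map_map] at hfac
  have hfac2 : ∏ i ∈ Finset.range n, (X - C (ω ^ i)) = (X : ℂ[X]) ^ n - C 1 := by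
    rw [Finset.prod]
    convert hfac using 2
    rfl
  obtain ⟨m, rfl⟩ : ∃ m, n = m + 1 := ⟨n - 1, by omega⟩
  rw [Finset.prod_range_succ'] at hfac2
  have hgeom : (∑ i ∈ Finset.range (m + 1), (X : ℂ[X]) ^ i) * (X - 1) =
      (X : ℂ[X]) ^ (m + 1) - 1 := geom_sum_mul _ _
  have hX1 : (X - 1 : ℂ[X]) ≠ 0 := by
    intro h
    have := congrArg (eval 0) h
    simp at this
  have hcancel : (∏ i ∈ Finset.range m, (X - C (ω ^ (i + 1)))) =
      ∑ i ∈ Finset.range (m + 1), (X : ℂ[X]) ^ i := by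
    apply mul_right_cancel₀ hX1
    rw [hgeom]
    simpa using hfac2
  have hev := congrArg (eval 1) hcancel
  rw [eval_prod, eval_finset_sum] at hev
  simp only [Nat.add_sub_cancel]
  rw [show Finset.Icc 1 m = Finset.image (· + 1) (Finset.range m) by
    ext x
    simp only [Finset.mem_Icc, Finset.mem_image, Finset.mem_range]
    constructor
    · rintro ⟨h1, h2⟩; exact ⟨x - 1, by omega, by omega⟩
    · rintro ⟨a, ha, rfl⟩; omega]
  rw [Finset.prod_image (by intro a _ b _ h; dsimp only at h; omega)]
  simpa using hev

private lemma myPar (n T : ℕ) (hn : 1 ≤ n) (hT : T * 2 = (n - 1) * n) :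
    (T + (n + 1) * (n - 1)) % 2 = ((n ^ 2 + n + 2) / 2) % 2 := by
  obtain ⟨u, rfl⟩ : ∃ u, n = u + 1 := ⟨n - 1, by omega⟩
  have hT' : T * 2 = u * (u + 1) := by simpa using hT
  obtain ⟨v, hv⟩ : ∃ v, u * u = v := ⟨_, rfl⟩
  have e2 : (u + 1 + 1) * (u + 1 - 1) = v + 2 * u := by
    rw [Nat.add_sub_cancel, ← hv]; ring
  have e3 : (u + 1) ^ 2 + (u + 1) + 2 = v + 3 * u + 4 := by rw [← hv]; ring
  have hT'' : T * 2 = v + u := by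
    have huv : u * (u + 1) = v + u := by rw [← hv]; ring
    omega
  rw [e2, e3]
  omega

private lemma myGauss : ∀ u : ℕ, (∑ j ∈ Finset.Icc 1 u, j) * 2 = u * (u + 1) := by
  intro u
  induction u with
  | zero => simp
  | succ v ih =>
    rw [Finset.sum_Icc_succ_top (by omega)]
    ring_nf
    ring_nf at ih
    linear_combination ih

private lemma mySum1 : ∀ u : ℕ, (∑ j ∈ Finset.Icc 1 (u + 1), (j - 1)) * 2 = u * (u + 1) := by
  intro u
  induction u with
  | zero => simp
  | succ v ih =>
    rw [Finset.sum_Icc_succ_top (by omega)]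
    have : v + 1 + 1 - 1 = v + 1 := by omega
    rw [this]
    ring_nf
    ring_nf at ih
    linear_combination ih

private lemma mySum2 : ∀ u : ℕ,
    (∑ j ∈ Finset.Icc 1 (u + 1), ∑ i ∈ Finset.Icc 1 (j - 1), (i + j)) * 2
      = u * (u + 1) * (u + 2) := by
  intro u
  induction u with
  | zero => simp
  | succ v ih =>
    rw [Finset.sum_Icc_succ_top (by omega)]
    have h1 : v + 1 + 1 - 1 = v + 1 := by omega
    rw [h1, Finset.sum_add_distrib, Finset.sum_const, Nat.card_Icc]
    have h2 : v + 1 + 1 - 1 = v + 1 := by omega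
    rw [h2]
    have hg := myGauss (v + 1)
    ring_nf
    ring_nf at ih hg
    linear_combination ih + hg

open Complex in
theorem stmt_10 (p n : ℕ) (hp : p.Prime) (hp3 : 3 < p) (hpn : p = 2 * n + 1) :
    (∏ j ∈ Finset.Icc 1 n, ∏ i ∈ Finset.Icc 1 (j - 1),
        (Complex.exp (2 * Real.pi * I / (p - 1)) ^ (2 * j) -
          Complex.exp (2 * Real.pi * I / (p - 1)) ^ (2 * i))) ^ 2 =
      (n : ℂ) ^ n * (-1) ^ ((n ^ 2 + n + 2) / 2) := by
  have hn2 : 2 ≤ n := by omega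
  have hn0 : (n : ℂ) ≠ 0 := Nat.cast_ne_zero.mpr (by omega)
  set ω : ℂ := Complex.exp (2 * Real.pi * I / n) with hωdef
  have hprim : IsPrimitiveRoot ω n := Complex.isPrimitiveRoot_exp n (by omega)
  have hωn : ω ^ n = 1 := hprim.pow_eq_one
  -- ζ² = ω
  have hζ2 : Complex.exp (2 * Real.pi * I / ((p : ℂ) - 1)) ^ 2 = ω := by
    rw [hωdef, ← Complex.exp_nat_mul]
    congr 1
    have hp1 : (p : ℂ) - 1 = 2 * n := by
      have : (p : ℂ) = 2 * n + 1 := by exact_mod_cast congrArg (Nat.cast : ℕ → ℂ) hpn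
      rw [this]; ring
    rw [hp1]
    field_simp
    ring
  -- rewrite the product in terms of ω
  have hrw : (∏ j ∈ Finset.Icc 1 n, ∏ i ∈ Finset.Icc 1 (j - 1),
        (Complex.exp (2 * Real.pi * I / ((p:ℂ) - 1)) ^ (2 * j) -
          Complex.exp (2 * Real.pi * I / ((p:ℂ) - 1)) ^ (2 * i)))
      = ∏ j ∈ Finset.Icc 1 n, ∏ i ∈ Finset.Icc 1 (j - 1), (ω ^ j - ω ^ i) := by
    simp only [pow_mul, hζ2]
  rw [hrw]
  -- square inside
  rw [← Finset.prod_pow]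
  have hsq : ∀ j ∈ Finset.Icc 1 n,
      (∏ i ∈ Finset.Icc 1 (j - 1), (ω ^ j - ω ^ i)) ^ 2
        = ∏ i ∈ Finset.Icc 1 (j - 1), (ω ^ j - ω ^ i) ^ 2 := fun j _ => by
    rw [Finset.prod_pow]
  rw [Finset.prod_congr rfl hsq]
  -- per-term identity
  have key : ∀ j ∈ Finset.Icc 1 n, ∀ i ∈ Finset.Icc 1 (j - 1),
      (ω ^ j - ω ^ i) ^ 2
        = (-1) * ω ^ (i + j) * ((1 - ω ^ (j - i)) * (1 - ω ^ (n - (j - i)))) := by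
    intro j hj i hi
    simp only [Finset.mem_Icc] at hj hi
    have hij : i < j := by omega
    have e1 : ω ^ i * (1 - ω ^ (j - i)) = ω ^ i - ω ^ j := by
      rw [mul_sub, mul_one, ← pow_add]
      congr 2
      omega
    have e2 : ω ^ j * (1 - ω ^ (n - (j - i))) = ω ^ j - ω ^ i := by
      rw [mul_sub, mul_one, ← pow_add]
      have hjn : j + (n - (j - i)) = n + i := by omega
      rw [hjn, pow_add, hωn, one_mul]
    rw [pow_add]
    calc (ω ^ j - ω ^ i) ^ 2
        = -((ω ^ i - ω ^ j) * (ω ^ j - ω ^ i)) := by ring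
      _ = -((ω ^ i * (1 - ω ^ (j - i))) * (ω ^ j * (1 - ω ^ (n - (j - i))))) := by
          rw [e1, e2]
      _ = -1 * (ω ^ i * ω ^ j) * ((1 - ω ^ (j - i)) * (1 - ω ^ (n - (j - i)))) := by ring
  rw [Finset.prod_congr rfl (fun j hj => Finset.prod_congr rfl (key j hj))]
  simp only [Finset.prod_mul_distrib]
  -- Piece 1 : product of -1's
  have hT2 := mySum1 (n - 1)
  rw [show n - 1 + 1 = n by omega] at hT2
  set T : ℕ := ∑ j ∈ Finset.Icc 1 n, (j - 1) with hTdef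
  have hP1 : (∏ j ∈ Finset.Icc 1 n, ∏ _i ∈ Finset.Icc 1 (j - 1), (-1 : ℂ)) = (-1) ^ T := by
    simp only [Finset.prod_const, Nat.card_Icc, hTdef]
    rw [Finset.prod_pow_eq_pow_sum]
    congr 1
  -- Piece 2 : product of ω^(i+j)
  set S : ℕ := ∑ j ∈ Finset.Icc 1 n, ∑ i ∈ Finset.Icc 1 (j - 1), (i + j) with hSdef
  have hP2 : (∏ j ∈ Finset.Icc 1 n, ∏ i ∈ Finset.Icc 1 (j - 1), ω ^ (i + j)) = ω ^ S := by
    simp only [Finset.prod_pow_eq_pow_sum, hSdef]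
  have hS2 := mySum2 (n - 1)
  rw [show n - 1 + 1 = n by omega, show n - 1 + 2 = n + 1 by omega] at hS2
  -- Piece 3 : main product equals n^n
  have hP3 : ((∏ j ∈ Finset.Icc 1 n, ∏ i ∈ Finset.Icc 1 (j - 1), (1 - ω ^ (j - i))) *
      (∏ j ∈ Finset.Icc 1 n, ∏ i ∈ Finset.Icc 1 (j - 1), (1 - ω ^ (n - (j - i)))))
        = (n : ℂ) ^ n := by
    simp only [← Finset.prod_mul_distrib]
    have hinner : ∀ j ∈ Finset.Icc 1 n,
        (∏ i ∈ Finset.Icc 1 (j - 1), ((1 - ω ^ (j - i)) * (1 - ω ^ (n - (j - i)))))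
          = ∏ d ∈ Finset.Icc 1 (j - 1), ((1 - ω ^ d) * (1 - ω ^ (n - d))) := by
      intro j hj
      simp only [Finset.mem_Icc] at hj
      refine Finset.prod_nbij' (fun a => j - a) (fun a => j - a) ?_ ?_ ?_ ?_ ?_
      · intro a ha; simp only [Finset.mem_Icc] at ha ⊢; omega
      · intro a ha; simp only [Finset.mem_Icc] at ha ⊢; omega
      · intro a ha; simp only [Finset.mem_Icc] at ha; omega
      · intro a ha; simp only [Finset.mem_Icc] at ha; omega
      · intro a ha; rfl
    rw [Finset.prod_congr rfl hinner]
    rw [Finset.prod_comm' (t' := Finset.Icc 1 (n - 1)) (s' := fun d => Finset.Icc (d + 1) n)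
      (by intro j d; simp only [Finset.mem_Icc]; omega)]
    have hconst : ∀ d ∈ Finset.Icc 1 (n - 1),
        (∏ _j ∈ Finset.Icc (d + 1) n, ((1 - ω ^ d) * (1 - ω ^ (n - d))))
          = (1 - ω ^ d) ^ (n - d) * (1 - ω ^ (n - d)) ^ (n - d) := by
      intro d hd
      rw [Finset.prod_const, Nat.card_Icc, mul_pow]
      congr 2 <;> omega
    rw [Finset.prod_congr rfl hconst, Finset.prod_mul_distrib]
    have hrefl : (∏ d ∈ Finset.Icc 1 (n - 1), (1 - ω ^ (n - d)) ^ (n - d))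
        = ∏ d ∈ Finset.Icc 1 (n - 1), (1 - ω ^ d) ^ d := by
      refine Finset.prod_nbij' (fun a => n - a) (fun a => n - a) ?_ ?_ ?_ ?_ ?_
      · intro a ha; simp only [Finset.mem_Icc] at ha ⊢; omega
      · intro a ha; simp only [Finset.mem_Icc] at ha ⊢; omega
      · intro a ha; simp only [Finset.mem_Icc] at ha; omega
      · intro a ha; simp only [Finset.mem_Icc] at ha; omega
      · intro a ha; rfl
    rw [hrefl, ← Finset.prod_mul_distrib]
    have hmerge : ∀ d ∈ Finset.Icc 1 (n - 1),
        (1 - ω ^ d) ^ (n - d) * (1 - ω ^ d) ^ d = (1 - ω ^ d) ^ n := by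
      intro d hd
      simp only [Finset.mem_Icc] at hd
      rw [← pow_add]
      congr 1
      omega
    rw [Finset.prod_congr rfl hmerge, Finset.prod_pow, myL1 (by omega) hprim]
  rw [hP1, hP2, hP3]
  -- now compute ω^S
  have hNhalf : ∀ k : ℕ, k * 2 = n * (n + 1) → ω ^ k = (-1) ^ (n + 1) := by
    intro k hk
    rw [hωdef, ← Complex.exp_nat_mul]
    have harg : (k : ℂ) * (2 * Real.pi * I / n) = (n + 1 : ℕ) * (Real.pi * I) := by
      have h2k : ((k : ℂ)) * 2 = (n : ℂ) * ((n : ℕ) + 1) := by exact_mod_cast congrArg (Nat.cast : ℕ → ℂ) hk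
      field_simp
      push_cast
      push_cast at h2k
      linear_combination h2k
    rw [harg, Complex.exp_nat_mul, Complex.exp_pi_mul_I]
  have hωhalf : ω ^ (n * (n + 1) / 2) = (-1 : ℂ) ^ (n + 1) := by
    apply hNhalf
    exact Nat.div_mul_cancel (Nat.even_mul_succ_self n).two_dvd
  have hSval : S = n * (n + 1) / 2 * (n - 1) := by
    have heven : n * (n + 1) / 2 * 2 = n * (n + 1) := Nat.div_mul_cancel (Nat.even_mul_succ_self n).two_dvd
    have h1 : S * 2 = (n - 1) * n * (n + 1) := hS2
    have h2 : (n * (n + 1) / 2 * (n - 1)) * 2 = (n - 1) * n * (n + 1) := by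
      calc (n * (n + 1) / 2 * (n - 1)) * 2 = (n * (n + 1) / 2 * 2) * (n - 1) := by ring
        _ = (n * (n + 1)) * (n - 1) := by rw [heven]
        _ = (n - 1) * n * (n + 1) := by ring
    omega
  rw [hSval, pow_mul, hωhalf, ← pow_mul, ← pow_add]
  -- final sign bookkeeping
  have hpar := myPar n T (by omega) hT2
  rw [myNegOnePow _ _ hpar]
  ring
end

section
/- Let p = 2n+1 > 3 be a prime and ζ = e^(2πi/(p-1)). Then the product over 1 ≤ i < j ≤ n of (ζ^(2j) - ζ^(2i)) equals n^(n/2) · e^((3n² - n - 2)πi/4). -/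
open Complex Finset Real in
private lemma key11 (x y : ℝ) : Complex.exp (x*I) - Complex.exp (y*I)
    = 2 * Real.sin ((x-y)/2) * Complex.exp ((((x:ℂ)+y)/2 + (Real.pi:ℂ)/2) * I) := by
  have hI : Complex.exp (((Real.pi:ℂ)/2) * I) = I := by
    have : ((Real.pi:ℂ)/2) * I = ((Real.pi/2 : ℝ):ℂ) * I := by push_cast; ring
    rw [this, Complex.exp_mul_I]; simp
  have harg : (((x:ℂ)+y)/2 + (Real.pi:ℂ)/2) * I = (((x+y)/2:ℝ):ℂ) * I + ((Real.pi:ℂ)/2) * I := by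
    push_cast; ring
  rw [harg, Complex.exp_add, hI]
  rw [Complex.ofReal_sin, Complex.sin]
  have e1 : Complex.exp (x*I) = Complex.exp (((x+y)/2:ℝ)*I) * Complex.exp ((((x-y)/2:ℝ))*I) := by
    rw [← Complex.exp_add]; congr 1; push_cast; ring
  have e2 : Complex.exp (y*I) = Complex.exp (((x+y)/2:ℝ)*I) * Complex.exp ((-((x-y)/2:ℝ))*I) := by
    rw [← Complex.exp_add]; congr 1; push_cast; ring
  rw [e1, e2]
  push_cast
  ring_nf
  rw [Complex.I_sq]
  ring

open Complex Finset Real in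
private lemma L1of11 (n : ℕ) (hn : 2 ≤ n) :
    ∏ k ∈ Finset.Icc 1 (n-1), (2 * Real.sin (Real.pi * k / n)) = n := by
  have hn0 : (0:ℝ) < n := by positivity
  have hμ : IsPrimitiveRoot (Complex.exp (2 * Real.pi * I / n)) n :=
    Complex.isPrimitiveRoot_exp n (by omega)
  obtain ⟨m, rfl⟩ : ∃ m, n = m + 1 := ⟨n-1, by omega⟩
  have hprod := hμ.prod_one_sub_pow_eq_order
  have habs := congrArg (fun z : ℂ => ‖z‖) hprod
  rw [Complex.norm_prod] at habs
  have hfac : ∀ k ∈ Finset.range m,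
      ‖1 - Complex.exp (2 * Real.pi * I / (m+1:ℕ)) ^ (k+1)‖
        = 2 * Real.sin (Real.pi * (k+1) / (m+1:ℕ)) := by
    intro k hk
    rw [Finset.mem_range] at hk
    set θ : ℝ := 2 * Real.pi * (k+1) / (m+1:ℕ) with hθ
    have hpow : Complex.exp (2 * Real.pi * I / (m+1:ℕ)) ^ (k+1)
        = Complex.exp ((θ:ℝ) * I) := by
      rw [← Complex.exp_nat_mul]
      congr 1
      rw [hθ]; push_cast; field_simp
    have h1 : (1 : ℂ) = Complex.exp (((0:ℝ)) * I) := by simp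
    rw [hpow, h1, key11]
    rw [norm_mul, norm_mul]
    have harg : ((((0:ℝ):ℂ) + (θ:ℝ))/2 + (Real.pi:ℂ)/2) * I
        = ((θ/2 + Real.pi/2 : ℝ) : ℂ) * I := by push_cast; ring
    have hle : θ ≤ 2 * Real.pi := by
      rw [hθ, div_le_iff₀ (by positivity)]
      have h1 : (k:ℝ)+1 ≤ (m:ℝ)+1 := by exact_mod_cast Nat.succ_le_succ hk.le
      push_cast
      nlinarith [Real.pi_pos]
    have hsin : (0:ℝ) ≤ Real.sin (θ/2) := by
      apply Real.sin_nonneg_of_nonneg_of_le_pi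
      · positivity
      · linarith
    have hs : Real.sin ((0 - θ)/2) = - Real.sin (θ/2) := by
      rw [show (0-θ)/2 = -(θ/2) by ring, Real.sin_neg]
    rw [harg, Complex.norm_exp_ofReal_mul_I, mul_one, hs, Complex.ofReal_neg, norm_neg,
      Complex.norm_real, Real.norm_eq_abs, _root_.abs_of_nonneg hsin, Complex.norm_two]
    rw [hθ]; congr 1; push_cast; ring
  rw [Finset.prod_congr rfl hfac] at habs
  have : ‖(m:ℂ) + 1‖ = (m:ℝ) + 1 := by
    rw [show ((m:ℂ)+1) = ((m+1:ℝ):ℂ) by push_cast; ring, Complex.norm_real, Real.norm_eq_abs]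
    exact abs_of_nonneg (by positivity)
  rw [this] at habs
  rw [show (m+1) - 1 = m by omega]
  rw [show Finset.Icc 1 m = Finset.Ico 1 (m+1) by rfl, Finset.prod_Ico_eq_prod_range]
  simp only [Nat.add_sub_cancel]
  have hi : ∀ k ∈ Finset.range m, 2 * Real.sin (Real.pi * ((1+k:ℕ):ℝ) / ((m+1:ℕ):ℝ))
      = 2 * Real.sin (Real.pi * ((k:ℝ)+1) / ((m:ℝ)+1)) := by
    intro k _; congr 2; push_cast; ring
  rw [Finset.prod_congr rfl hi]
  have hj : ∀ k ∈ Finset.range m, 2 * Real.sin (Real.pi * ((k:ℝ)+1) / ((m+1:ℕ):ℝ))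
      = 2 * Real.sin (Real.pi * ((k:ℝ)+1) / ((m:ℝ)+1)) := by
    intro k _; congr 2; push_cast; ring
  rw [← Finset.prod_congr rfl hj, habs]
  push_cast; ring

private lemma L2of11 {M : Type*} [CommMonoid M] (n : ℕ) (f : ℕ → M) :
    ∏ j ∈ Finset.Icc 1 n, ∏ i ∈ Finset.Icc 1 (j-1), f (j - i)
      = ∏ k ∈ Finset.Icc 1 (n-1), f k ^ (n - k) := by
  have step1 : ∀ j ∈ Finset.Icc 1 n,
      ∏ i ∈ Finset.Icc 1 (j-1), f (j - i) = ∏ k ∈ Finset.Icc 1 (j-1), f k := by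
    intro j hj
    rw [Finset.mem_Icc] at hj
    apply Finset.prod_nbij' (fun i => j - i) (fun k => j - k)
    · intro a ha; rw [Finset.mem_Icc] at *; omega
    · intro a ha; rw [Finset.mem_Icc] at *; omega
    · intro a ha; rw [Finset.mem_Icc] at ha; omega
    · intro a ha; rw [Finset.mem_Icc] at ha; omega
    · intro a ha; rfl
  rw [Finset.prod_congr rfl step1]
  rw [Finset.prod_comm' (t' := Finset.Icc 1 (n-1)) (s' := fun k => Finset.Icc (k+1) n)
    (by intro x y; simp only [Finset.mem_Icc]; omega)]
  apply Finset.prod_congr rfl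
  intro k hk
  rw [Finset.mem_Icc] at hk
  rw [Finset.prod_const, Nat.card_Icc]
  congr 1
  omega

private lemma L3of11 {M : Type*} [CommMonoid M] (n : ℕ) (g : ℕ → M) :
    ∏ k ∈ Finset.Icc 1 (n-1), g k = ∏ k ∈ Finset.Icc 1 (n-1), g (n - k) := by
  apply Finset.prod_nbij' (fun k => n - k) (fun k => n - k)
  · intro a ha; rw [Finset.mem_Icc] at *; omega
  · intro a ha; rw [Finset.mem_Icc] at *; omega
  · intro a ha; rw [Finset.mem_Icc] at ha; omega
  · intro a ha; rw [Finset.mem_Icc] at ha; omega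
  · intro a ha; rw [Finset.mem_Icc] at ha; congr 1; omega

open Complex Finset Real in
private lemma LPof11 (n : ℕ) (hn : 2 ≤ n) :
    ∏ j ∈ Finset.Icc 1 n, ∏ i ∈ Finset.Icc 1 (j-1),
      (2 * Real.sin (Real.pi * ((j - i : ℕ):ℝ) / n))
    = (n:ℝ) ^ ((n:ℝ)/2) := by
  have hn0 : (0:ℝ) < n := by positivity
  set F : ℕ → ℝ := fun k => 2 * Real.sin (Real.pi * k / n) with hF
  have hFpos : ∀ k, 1 ≤ k → k ≤ n - 1 → 0 < F k := by
    intro k h1 h2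
    have : (k:ℝ) < n := by exact_mod_cast (by omega : k < n)
    apply mul_pos two_pos
    apply Real.sin_pos_of_pos_of_lt_pi
    · positivity
    · rw [div_lt_iff₀ hn0]
      nlinarith [Real.pi_pos]
  have hP : ∏ j ∈ Finset.Icc 1 n, ∏ i ∈ Finset.Icc 1 (j-1),
      (2 * Real.sin (Real.pi * ((j - i : ℕ):ℝ) / n)) = ∏ k ∈ Finset.Icc 1 (n-1), F k ^ (n-k) :=
    L2of11 n F
  have hsym : ∀ k ∈ Finset.Icc 1 (n-1), F (n - k) = F k := by
    intro k hk
    rw [Finset.mem_Icc] at hk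
    rw [hF]
    simp only
    congr 1
    rw [show ((n - k : ℕ):ℝ) = (n:ℝ) - k by push_cast [Nat.cast_sub (by omega : k ≤ n)]; ring]
    rw [show Real.pi * ((n:ℝ) - k) / n = Real.pi - Real.pi * k / n by field_simp]
    rw [Real.sin_pi_sub]
  set P : ℝ := ∏ k ∈ Finset.Icc 1 (n-1), F k ^ (n-k) with hPdef
  have hPpos : 0 < P := by
    apply Finset.prod_pos
    intro k hk
    rw [Finset.mem_Icc] at hk
    exact pow_pos (hFpos k hk.1 hk.2) _
  have halt : P = ∏ k ∈ Finset.Icc 1 (n-1), F k ^ k := by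
    rw [hPdef, L3of11 n (fun k => F k ^ (n-k))]
    apply Finset.prod_congr rfl
    intro k hk
    rw [hsym k hk]
    rw [Finset.mem_Icc] at hk
    congr 1
    omega
  have hsq : P ^ 2 = (n:ℝ) ^ n := by
    have h2 : P ^ 2 = P * P := sq P
    rw [h2]
    nth_rewrite 2 [halt]
    rw [hPdef, ← Finset.prod_mul_distrib]
    have : ∀ k ∈ Finset.Icc 1 (n-1), F k ^ (n-k) * F k ^ k = F k ^ n := by
      intro k hk
      rw [Finset.mem_Icc] at hk
      rw [← pow_add]
      congr 1
      omega
    rw [Finset.prod_congr rfl this, Finset.prod_pow, L1of11 n hn]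
  rw [hP]
  have hrpow : (n:ℝ) ^ ((n:ℝ)/2) = Real.sqrt ((n:ℝ) ^ n) := by
    rw [Real.sqrt_eq_rpow, ← Real.rpow_natCast (n:ℝ) n, ← Real.rpow_mul hn0.le]
    congr 1
    ring
  rw [hrpow, ← hsq, Real.sqrt_sq hPpos.le]

private lemma LS0of11 (n : ℕ) : ∑ i ∈ Finset.Icc 1 n, (i:ℝ) = n*(n+1)/2 := by
  induction n with
  | zero => simp
  | succ m ih =>
    rw [Finset.sum_Icc_succ_top (by omega), ih]
    push_cast; ring

private lemma LS1of11 (n : ℕ) : ∑ j ∈ Finset.Icc 1 n, ∑ i ∈ Finset.Icc 1 (j-1), ((i:ℝ)+(j:ℝ))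
    = ((n:ℝ)^3 - n)/2 := by
  induction n with
  | zero => simp
  | succ m ih =>
    rw [Finset.sum_Icc_succ_top (by omega), ih]
    have : ∑ i ∈ Finset.Icc 1 ((m+1)-1), ((i:ℝ)+((m+1:ℕ):ℝ))
        = (m:ℝ)*(m+1)/2 + m*(m+1) := by
      rw [show (m+1)-1 = m by omega, Finset.sum_add_distrib, LS0of11, Finset.sum_const,
        Nat.card_Icc]
      rw [show m + 1 - 1 = m by omega, nsmul_eq_mul]
      push_cast; ring
    rw [this]; push_cast; ring

private lemma LS2of11 (n : ℕ) : ∑ j ∈ Finset.Icc 1 n, ∑ _i ∈ Finset.Icc 1 (j-1), (1:ℝ)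
    = (n:ℝ)*((n:ℝ)-1)/2 := by
  induction n with
  | zero => simp
  | succ m ih =>
    rw [Finset.sum_Icc_succ_top (by omega), ih]
    rw [Finset.sum_const, Nat.card_Icc, show (m+1)-1 = m by omega, show m+1-1 = m by omega]
    push_cast; ring

open Complex in
theorem stmt_11 (p n : ℕ) (hp : p.Prime) (hp3 : 3 < p) (hpn : p = 2 * n + 1) :
    (∏ j ∈ Finset.Icc 1 n, ∏ i ∈ Finset.Icc 1 (j - 1),
        (Complex.exp (2 * Real.pi * I / (p - 1)) ^ (2 * j) -
          Complex.exp (2 * Real.pi * I / (p - 1)) ^ (2 * i))) =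
      (((n : ℝ) ^ ((n : ℝ) / 2) : ℝ) : ℂ) *
        Complex.exp ((3 * (n : ℂ) ^ 2 - n - 2) * Real.pi * I / 4) := by
  have hn2 : 2 ≤ n := by omega
  have hnR : (0:ℝ) < n := by positivity
  have hp1 : ((p:ℂ) - 1) = 2 * n := by rw [hpn]; push_cast; ring
  have hpow : ∀ m : ℕ, Complex.exp (2 * (Real.pi:ℂ) * I / ((p:ℂ) - 1)) ^ (2*m)
      = Complex.exp (((2 * Real.pi * m / n : ℝ):ℂ) * I) := by
    intro m
    rw [← Complex.exp_nat_mul, hp1]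
    congr 1
    have hnC : (n:ℂ) ≠ 0 := Nat.cast_ne_zero.mpr (by omega)
    push_cast
    field_simp
  have hfac : ∀ j ∈ Finset.Icc 1 n, ∀ i ∈ Finset.Icc 1 (j-1),
      Complex.exp (2*(Real.pi:ℂ)*I/((p:ℂ)-1))^(2*j) - Complex.exp (2*(Real.pi:ℂ)*I/((p:ℂ)-1))^(2*i)
        = ((2*Real.sin (Real.pi*((j-i:ℕ):ℝ)/n) : ℝ):ℂ)
          * Complex.exp (((Real.pi*((i:ℝ)+(j:ℝ))/n + Real.pi/2 : ℝ):ℂ) * I) := by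
    intro j hj i hi
    rw [Finset.mem_Icc] at hj hi
    rw [hpow j, hpow i, key11 (2*Real.pi*j/n) (2*Real.pi*i/n)]
    congr 2
    · push_cast [Nat.cast_sub (show i ≤ j by omega)]
      field_simp
    · push_cast
      field_simp
      ring
  rw [Finset.prod_congr rfl (fun j hj => Finset.prod_congr rfl (hfac j hj))]
  rw [Finset.prod_congr rfl
    (fun j _ => Finset.prod_mul_distrib (s := Finset.Icc 1 (j-1))), Finset.prod_mul_distrib]
  have hsinpart : (∏ j ∈ Finset.Icc 1 n, ∏ i ∈ Finset.Icc 1 (j-1),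
      ((2*Real.sin (Real.pi*((j-i:ℕ):ℝ)/n) : ℝ):ℂ)) = (((n:ℝ) ^ ((n:ℝ)/2) : ℝ) : ℂ) := by
    rw [show (∏ j ∈ Finset.Icc 1 n, ∏ i ∈ Finset.Icc 1 (j-1),
        ((2*Real.sin (Real.pi*((j-i:ℕ):ℝ)/n) : ℝ):ℂ))
      = (((∏ j ∈ Finset.Icc 1 n, ∏ i ∈ Finset.Icc 1 (j-1),
        (2*Real.sin (Real.pi*((j-i:ℕ):ℝ)/n)) : ℝ)):ℂ) by push_cast; rfl]
    rw [LPof11 n hn2]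
  have hexppart : (∏ j ∈ Finset.Icc 1 n, ∏ i ∈ Finset.Icc 1 (j-1),
      Complex.exp (((Real.pi*((i:ℝ)+(j:ℝ))/n + Real.pi/2 : ℝ):ℂ) * I))
      = Complex.exp ((3 * (n:ℂ)^2 - n - 2) * Real.pi * I / 4) := by
    rw [Finset.prod_congr rfl (fun j _ => (Complex.exp_sum (Finset.Icc 1 (j-1)) _).symm),
      ← Complex.exp_sum]
    congr 1
    have hsums : ∀ j : ℕ, (∑ i ∈ Finset.Icc 1 (j-1),
          (((Real.pi*((i:ℝ)+(j:ℝ))/n + Real.pi/2 : ℝ):ℂ) * I))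
        = (((Finset.Icc 1 (j-1)).sum
            (fun i : ℕ => Real.pi*((i:ℝ)+(j:ℝ))/n + Real.pi/2) : ℝ) : ℂ) * I := by
      intro j
      rw [← Finset.sum_mul]
      congr 1
      push_cast; rfl
    rw [Finset.sum_congr rfl (fun j _ => hsums j)]
    rw [← Finset.sum_mul]
    rw [show (∑ j ∈ Finset.Icc 1 n, ((((Finset.Icc 1 (j-1)).sum
          (fun i : ℕ => Real.pi*((i:ℝ)+(j:ℝ))/n + Real.pi/2) : ℝ)):ℂ))
      = ((((Finset.Icc 1 n).sum (fun j : ℕ => (Finset.Icc 1 (j-1)).sum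
          (fun i : ℕ => Real.pi*((i:ℝ)+(j:ℝ))/n + Real.pi/2)) : ℝ)):ℂ) by push_cast; rfl]
    have hreal : ((Finset.Icc 1 n).sum (fun j : ℕ => (Finset.Icc 1 (j-1)).sum
          (fun i : ℕ => Real.pi*((i:ℝ)+(j:ℝ))/n + Real.pi/2)))
        = Real.pi * (3*(n:ℝ)^2 - n - 2)/4 := by
      have expand : ∀ j : ℕ, ((Finset.Icc 1 (j-1)).sum
            (fun i : ℕ => Real.pi*((i:ℝ)+(j:ℝ))/n + Real.pi/2))
          = (Real.pi/n) * ((Finset.Icc 1 (j-1)).sum (fun i : ℕ => (i:ℝ)+(j:ℝ)))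
            + (Real.pi/2) * ((Finset.Icc 1 (j-1)).sum (fun _i : ℕ => (1:ℝ))) := by
        intro j
        rw [Finset.mul_sum, Finset.mul_sum, ← Finset.sum_add_distrib]
        apply Finset.sum_congr rfl
        intro i _
        ring
      rw [Finset.sum_congr rfl (fun j _ => expand j), Finset.sum_add_distrib,
        ← Finset.mul_sum, ← Finset.mul_sum, LS1of11, LS2of11]
      field_simp
      ring
    rw [hreal]
    push_cast
    field_simp
  rw [hsinpart, hexppart]
end

section
/- Let p ≡ 5 (mod 8) be a prime, n = (p-1)/2, and ζ = e^(2πi/(p-1)). Then the product over 1 ≤ i < j ≤ n of (ζ^(2j) - ζ^(2i)) equals n^(n/2) · (-1)^((n-2)/4), an integer. -/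
open Complex Finset

private lemma aux_exp_sub_exp (a b : ℂ) :
    Complex.exp (I * a) - Complex.exp (I * b)
      = Complex.exp (I * ((a + b) / 2)) * (2 * I * Complex.sin ((a - b) / 2)) := by
  have h : 2 * I * Complex.sin ((a - b) / 2)
      = Complex.exp (((a - b) / 2) * I) - Complex.exp (-(((a - b) / 2) * I)) := by
    rw [Complex.sin]
    have : I * I = -1 := Complex.I_mul_I
    field_simp
    ring_nf
    rw [Complex.I_sq]
    ring
  rw [h, mul_sub, ← Complex.exp_add, ← Complex.exp_add]
  ring_nf

private lemma aux_exp_pi_div_two : Complex.exp ((Real.pi : ℂ) / 2 * I) = I := by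
  rw [Complex.exp_mul_I]
  have h1 : ((Real.pi : ℂ) / 2) = ((Real.pi / 2 : ℝ) : ℂ) := by push_cast; ring
  rw [h1, ← Complex.ofReal_cos, ← Complex.ofReal_sin, Real.cos_pi_div_two, Real.sin_pi_div_two]
  simp

private lemma aux_sum_range_cast (m : ℕ) :
    (∑ k ∈ Finset.range m, ((k : ℂ) + 1)) = m * (m + 1) / 2 := by
  induction m with
  | zero => simp
  | succ m ih => rw [Finset.sum_range_succ, ih]; push_cast; ring

private lemma aux_two_sin_prod (m : ℕ) :
    ∏ k ∈ Finset.range m, (2 * Real.sin (Real.pi * (k + 1) / (m + 1))) = m + 1 := by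
  have hm1 : ((m : ℂ) + 1) ≠ 0 := Nat.cast_add_one_ne_zero m
  have hμ : IsPrimitiveRoot (Complex.exp (2 * Real.pi * I / (m + 1))) (m + 1) := by
    have := Complex.isPrimitiveRoot_exp (m + 1) (Nat.succ_ne_zero m)
    rwa [Nat.cast_add, Nat.cast_one] at this
  have hprod := hμ.prod_one_sub_pow_eq_order
  -- rewrite each factor
  have hfac : ∀ k : ℕ, (1 : ℂ) - Complex.exp (2 * Real.pi * I / (m + 1)) ^ (k + 1)
      = Complex.exp (I * (((Real.pi * (k+1) / (m+1) : ℝ)) : ℂ))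
        * (-(2 * I) * Complex.sin (((Real.pi * (k+1) / (m+1) : ℝ) : ℂ))) := by
    intro k
    have h1 : Complex.exp (2 * Real.pi * I / (m + 1)) ^ (k + 1)
        = Complex.exp (I * (2 * (((Real.pi * (k+1) / (m+1) : ℝ)) : ℂ))) := by
      rw [← Complex.exp_nat_mul]
      congr 1
      push_cast
      field_simp
    have h0 : (1 : ℂ) = Complex.exp (I * 0) := by simp
    rw [h1, h0, aux_exp_sub_exp]
    congr 1
    · congr 1; ring
    · rw [show (0 - 2 * (((Real.pi * (k+1) / (m+1) : ℝ)) : ℂ)) / 2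
          = -(((Real.pi * (k+1) / (m+1) : ℝ)) : ℂ) by ring, Complex.sin_neg]
      ring
  rw [Finset.prod_congr rfl (fun k _ => hfac k), Finset.prod_mul_distrib,
    Finset.prod_mul_distrib, Finset.prod_const, ← Complex.exp_sum] at hprod
  have hsum : (∑ k ∈ Finset.range m, (I * (((Real.pi * (k+1) / (m+1) : ℝ)) : ℂ)))
      = (m : ℂ) * ((Real.pi : ℂ) / 2 * I) := by
    have : ∀ k : ℕ, (I * (((Real.pi * (k+1) / (m+1) : ℝ)) : ℂ))
        = (I * (Real.pi : ℂ) / (m+1)) * ((k : ℂ) + 1) := by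
      intro k; push_cast; ring
    rw [Finset.sum_congr rfl (fun k _ => this k), ← Finset.mul_sum, aux_sum_range_cast]
    field_simp
  rw [hsum, Complex.exp_nat_mul, aux_exp_pi_div_two] at hprod
  have hkey : (2 : ℂ) ^ m * ∏ k ∈ Finset.range m,
      Complex.sin (((Real.pi * (k+1) / (m+1) : ℝ)) : ℂ) = (m : ℂ) + 1 := by
    rw [Finset.card_range, ← mul_assoc, ← mul_pow] at hprod
    have h2 : I * -(2 * I) = 2 := by
      have := Complex.I_mul_I
      ring_nf
      rw [Complex.I_sq]
      ring
    rwa [h2] at hprod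
  have : ((∏ k ∈ Finset.range m, (2 * Real.sin (Real.pi * (k + 1) / (m + 1))) : ℝ) : ℂ)
      = (((m : ℝ) + 1 : ℝ) : ℂ) := by
    rw [Complex.ofReal_prod]
    simp only [Complex.ofReal_mul, Complex.ofReal_ofNat, Complex.ofReal_sin]
    rw [Finset.prod_mul_distrib, Finset.prod_const, Finset.card_range, hkey]
    push_cast
    ring
  exact_mod_cast this

private lemma aux_Q (n : ℕ) (hn2 : 2 ≤ n) (hne : Even n) :
    ∏ j ∈ Finset.Icc 1 n, ∏ i ∈ Finset.Icc 1 (j - 1),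
      (2 * Real.sin (Real.pi * j / n - Real.pi * i / n)) = (n : ℝ) ^ (n / 2) := by
  have hn0 : (0 : ℝ) < n := by positivity
  set g : ℕ → ℝ := fun d => 2 * Real.sin (Real.pi * d / n) with hg
  have ha : ∀ j ∈ Finset.Icc 1 n, (∏ i ∈ Finset.Icc 1 (j - 1),
      (2 * Real.sin (Real.pi * j / n - Real.pi * i / n))) = ∏ d ∈ Finset.Icc 1 (j - 1), g d := by
    intro j hj
    simp only [Finset.mem_Icc] at hj
    refine Finset.prod_nbij' (fun i => j - i) (fun d => j - d) ?_ ?_ ?_ ?_ ?_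
    · intro i hi; simp only [Finset.mem_Icc] at *; omega
    · intro d hd; simp only [Finset.mem_Icc] at *; omega
    · intro i hi; simp only [Finset.mem_Icc] at *; omega
    · intro d hd; simp only [Finset.mem_Icc] at *; omega
    · intro i hi
      simp only [Finset.mem_Icc] at hi
      have hij : ((j - i : ℕ) : ℝ) = (j : ℝ) - i := Nat.cast_sub (by omega)
      simp only [hg]
      rw [hij]
      congr 1
      ring
  rw [Finset.prod_congr rfl ha]
  rw [Finset.prod_comm' (t' := Finset.Icc 1 (n - 1)) (s' := fun d => Finset.Icc (d + 1) n)
    (by intro x y; simp only [Finset.mem_Icc]; omega)]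
  have hc : ∀ d ∈ Finset.Icc 1 (n - 1), (∏ _j ∈ Finset.Icc (d + 1) n, g d) = g d ^ (n - d) := by
    intro d hd
    rw [Finset.prod_const, Nat.card_Icc]
    congr 1
    omega
  rw [Finset.prod_congr rfl hc]
  have hgpos : ∀ d ∈ Finset.Icc 1 (n - 1), 0 < g d := by
    intro d hd
    simp only [Finset.mem_Icc] at hd
    have h1 : 0 < Real.pi * d / n := by
      have : (0:ℝ) < d := by exact_mod_cast Nat.lt_of_lt_of_le Nat.zero_lt_one hd.1
      positivity
    have h2 : Real.pi * d / n < Real.pi := by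
      rw [div_lt_iff₀ hn0]
      have : (d : ℝ) < n := by exact_mod_cast (by omega : d < n)
      nlinarith [Real.pi_pos]
    simp only [hg]
    nlinarith [Real.sin_pos_of_pos_of_lt_pi h1 h2]
  have hApos : 0 < ∏ d ∈ Finset.Icc 1 (n - 1), g d ^ (n - d) :=
    Finset.prod_pos fun d hd => pow_pos (hgpos d hd) _
  have hGprod : ∏ d ∈ Finset.Icc 1 (n - 1), g d = n := by
    have h := aux_two_sin_prod (n - 1)
    have hcast : ((n - 1 : ℕ) : ℝ) + 1 = n := by
      have : (1:ℕ) ≤ n := by omega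
      push_cast [Nat.cast_sub this]
      ring
    rw [hcast] at h
    rw [← h]
    refine Finset.prod_nbij' (fun d => d - 1) (fun k => k + 1) ?_ ?_ ?_ ?_ ?_
    · intro i hi; simp only [Finset.mem_Icc, Finset.mem_range] at *; omega
    · intro k hk; simp only [Finset.mem_Icc, Finset.mem_range] at *; omega
    · intro i hi; simp only [Finset.mem_Icc] at *; omega
    · intro k hk; simp only [Finset.mem_range] at *; omega
    · intro d hd
      simp only [Finset.mem_Icc] at hd
      simp only [hg]
      congr 2
      push_cast [Nat.cast_sub hd.1]
      ring
  have hrefl : ∏ d ∈ Finset.Icc 1 (n - 1), g d ^ (n - d)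
      = ∏ d ∈ Finset.Icc 1 (n - 1), g d ^ d := by
    refine Finset.prod_nbij' (fun d => n - d) (fun d => n - d) ?_ ?_ ?_ ?_ ?_
    · intro i hi; simp only [Finset.mem_Icc] at *; omega
    · intro d hd; simp only [Finset.mem_Icc] at *; omega
    · intro i hi; simp only [Finset.mem_Icc] at *; omega
    · intro d hd; simp only [Finset.mem_Icc] at *; omega
    · intro d hd
      simp only [Finset.mem_Icc] at hd
      have h1 : n - (n - d) = d := by omega
      have h2 : g (n - d) = g d := by
        simp only [hg]
        have : ((n - d : ℕ) : ℝ) = (n : ℝ) - d := by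
          exact_mod_cast Nat.cast_sub (by omega : d ≤ n)
        rw [this]
        congr 1
        rw [show Real.pi * ((n:ℝ) - d) / n = Real.pi - Real.pi * d / n by field_simp]
        rw [Real.sin_pi_sub]
      show g d ^ (n - d) = g (n - d) ^ (n - d)
      rw [h2]
  have hsq : (∏ d ∈ Finset.Icc 1 (n - 1), g d ^ (n - d))
      * (∏ d ∈ Finset.Icc 1 (n - 1), g d ^ (n - d)) = (n : ℝ) ^ n := by
    nth_rewrite 2 [hrefl]
    rw [← Finset.prod_mul_distrib]
    have : ∀ d ∈ Finset.Icc 1 (n - 1), g d ^ (n - d) * g d ^ d = g d ^ n := by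
      intro d hd
      simp only [Finset.mem_Icc] at hd
      rw [← pow_add]
      congr 1
      omega
    rw [Finset.prod_congr rfl this, Finset.prod_pow, hGprod]
  have hpow : (n : ℝ) ^ (n / 2) * (n : ℝ) ^ (n / 2) = (n : ℝ) ^ n := by
    rw [← pow_add]
    congr 1
    obtain ⟨r, hr⟩ := hne
    omega
  have := mul_self_inj hApos.le (by positivity : (0:ℝ) ≤ (n : ℝ) ^ (n / 2))
  exact this.mp (by rw [hsq, hpow])

private lemma aux_gauss (n : ℕ) : (∑ i ∈ Finset.Icc 1 n, (i : ℂ)) = n * (n + 1) / 2 := by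
  induction n with
  | zero => norm_num
  | succ n ih =>
    rw [Finset.sum_Icc_succ_top (by omega), ih]
    push_cast
    ring

private lemma auxS (n : ℕ) : (∑ j ∈ Finset.Icc 1 n, ∑ i ∈ Finset.Icc 1 (j - 1), ((i : ℂ) + j))
    = ((n : ℂ) - 1) * n * (n + 1) / 2 := by
  induction n with
  | zero => norm_num
  | succ n ih =>
    rw [Finset.sum_Icc_succ_top (by omega), ih]
    have h1 : (n + 1) - 1 = n := by omega
    rw [h1, Finset.sum_add_distrib, aux_gauss, Finset.sum_const, Nat.card_Icc]
    simp only [h1, nsmul_eq_mul]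
    push_cast
    ring

open Complex in
theorem stmt_12 (p n : ℕ) (hp : p.Prime) (hp8 : p % 8 = 5) (hpn : p = 2 * n + 1) :
    (∏ j ∈ Finset.Icc 1 n, ∏ i ∈ Finset.Icc 1 (j - 1),
        (Complex.exp (2 * Real.pi * I / (p - 1)) ^ (2 * j) -
          Complex.exp (2 * Real.pi * I / (p - 1)) ^ (2 * i))) =
      (n : ℂ) ^ (n / 2) * (-1) ^ ((n - 2) / 4) := by
  obtain ⟨t, ht⟩ : ∃ t, n = 4 * t + 2 := ⟨n / 4, by omega⟩
  have hn2 : 2 ≤ n := by omega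
  have hnC : (n : ℂ) ≠ 0 := Nat.cast_ne_zero.mpr (by omega)
  have hp1 : ((p : ℂ) - 1) = 2 * n := by rw [hpn]; push_cast; ring
  set N : ℕ := ∑ j ∈ Finset.Icc 1 n, (j - 1) with hNdef
  have hNval : N = (2 * t + 1) * (4 * t + 1) := by
    have h1 : N = ∑ k ∈ Finset.range n, k := by
      refine Finset.sum_nbij' (fun j => j - 1) (fun k => k + 1) ?_ ?_ ?_ ?_ ?_
      · intro j hj; simp only [Finset.mem_Icc, Finset.mem_range] at *; omega
      · intro k hk; simp only [Finset.mem_Icc, Finset.mem_range] at *; omega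
      · intro j hj; simp only [Finset.mem_Icc] at *; omega
      · intro k hk; simp only [Finset.mem_range] at *; omega
      · intro j hj; rfl
    have h2 := Finset.sum_range_id_mul_two n
    have e : n * (n - 1) = ((2 * t + 1) * (4 * t + 1)) * 2 := by
      subst ht
      rw [show 4 * t + 2 - 1 = 4 * t + 1 from by omega]
      ring
    have h3 : N * 2 = ((2 * t + 1) * (4 * t + 1)) * 2 := by rw [h1, h2, e]
    exact Nat.eq_of_mul_eq_mul_right (by norm_num) h3
  -- rewrite powers of ζ
  have hzeta : ∀ k : ℕ, Complex.exp (2 * Real.pi * I / (p - 1)) ^ (2 * k)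
      = Complex.exp (I * ((2 * Real.pi * k / n : ℝ) : ℂ)) := by
    intro k
    rw [← Complex.exp_nat_mul, hp1]
    congr 1
    push_cast
    field_simp
  have hfac : ∀ j i : ℕ,
      Complex.exp (I * ((2 * Real.pi * j / n : ℝ) : ℂ))
        - Complex.exp (I * ((2 * Real.pi * i / n : ℝ) : ℂ))
      = Complex.exp (I * ((Real.pi * j / n + Real.pi * i / n : ℝ) : ℂ))
        * (2 * I * Complex.sin (((Real.pi * j / n - Real.pi * i / n : ℝ)) : ℂ)) := by
    intro j i
    have e1 : (((2 * Real.pi * j / n : ℝ) : ℂ) + ((2 * Real.pi * i / n : ℝ) : ℂ)) / 2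
        = ((Real.pi * j / n + Real.pi * i / n : ℝ) : ℂ) := by push_cast; ring
    have e2 : (((2 * Real.pi * j / n : ℝ) : ℂ) - ((2 * Real.pi * i / n : ℝ) : ℂ)) / 2
        = ((Real.pi * j / n - Real.pi * i / n : ℝ) : ℂ) := by push_cast; ring
    rw [aux_exp_sub_exp, e1, e2]
  have hsplit : (∏ j ∈ Finset.Icc 1 n, ∏ i ∈ Finset.Icc 1 (j - 1),
        (Complex.exp (2 * Real.pi * I / (p - 1)) ^ (2 * j) -
          Complex.exp (2 * Real.pi * I / (p - 1)) ^ (2 * i)))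
      = (∏ j ∈ Finset.Icc 1 n, ∏ i ∈ Finset.Icc 1 (j - 1),
          Complex.exp (I * ((Real.pi * j / n + Real.pi * i / n : ℝ) : ℂ)))
        * ((2 * I) ^ N
          * ∏ j ∈ Finset.Icc 1 n, ∏ i ∈ Finset.Icc 1 (j - 1),
              Complex.sin (((Real.pi * j / n - Real.pi * i / n : ℝ)) : ℂ)) := by
    rw [Finset.prod_congr rfl (fun j _ => Finset.prod_congr rfl (fun i _ => by
      rw [hzeta, hzeta, hfac]))]
    simp only [Finset.prod_mul_distrib, Finset.prod_const, Nat.card_Icc, Nat.add_sub_cancel]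
    rw [Finset.prod_pow_eq_pow_sum, Finset.prod_pow_eq_pow_sum, ← hNdef, mul_pow]
  -- the exponential part
  have hE : (∏ j ∈ Finset.Icc 1 n, ∏ i ∈ Finset.Icc 1 (j - 1),
        Complex.exp (I * ((Real.pi * j / n + Real.pi * i / n : ℝ) : ℂ)))
      = Complex.exp ((I * Real.pi / n) * (((n : ℂ) - 1) * n * (n + 1) / 2)) := by
    rw [Finset.prod_congr rfl (fun j _ => (Complex.exp_sum _ _).symm), ← Complex.exp_sum]
    congr 1
    have : ∀ j i : ℕ, I * ((Real.pi * j / n + Real.pi * i / n : ℝ) : ℂ)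
        = (I * Real.pi / n) * ((i : ℂ) + j) := by
      intro j i; push_cast; ring
    rw [Finset.sum_congr rfl (fun j _ => Finset.sum_congr rfl (fun i _ => this j i))]
    simp only [← Finset.mul_sum]
    rw [auxS]
  -- the sine part
  have hQ : (2 : ℂ) ^ N * (∏ j ∈ Finset.Icc 1 n, ∏ i ∈ Finset.Icc 1 (j - 1),
        Complex.sin (((Real.pi * j / n - Real.pi * i / n : ℝ)) : ℂ))
      = ((n : ℂ)) ^ (n / 2) := by
    have hq := aux_Q n hn2 ⟨2 * t + 1, by omega⟩
    have := congrArg (Complex.ofReal) hq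
    rw [Complex.ofReal_prod] at this
    simp only [Complex.ofReal_prod, Complex.ofReal_mul, Complex.ofReal_ofNat,
      Complex.ofReal_sin, Complex.ofReal_sub, Complex.ofReal_div, Complex.ofReal_natCast,
      Complex.ofReal_pow] at this
    rw [← this]
    simp only [Finset.prod_mul_distrib, Finset.prod_const, Nat.card_Icc, Nat.add_sub_cancel]
    rw [Finset.prod_pow_eq_pow_sum, ← hNdef]
    push_cast
    ring
  -- the unit part
  have hunit : Complex.exp ((I * Real.pi / n) * (((n : ℂ) - 1) * n * (n + 1) / 2)) * I ^ N
      = (-1 : ℂ) ^ t := by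
    rw [show (I : ℂ) ^ N = Complex.exp ((Real.pi : ℂ) / 2 * I) ^ N from by
      rw [aux_exp_pi_div_two]]
    rw [← Complex.exp_nat_mul, ← Complex.exp_add]
    have harg : (I * Real.pi / n) * (((n : ℂ) - 1) * n * (n + 1) / 2)
          + (N : ℂ) * ((Real.pi : ℂ) / 2 * I)
        = (t : ℂ) * (Real.pi * I) + ((6 * t ^ 2 + 5 * t + 1 : ℕ) : ℂ) * (2 * Real.pi * I) := by
      have hnc : (n : ℂ) = 4 * t + 2 := by rw [ht]; push_cast; ring
      have hNc : (N : ℂ) = (2 * t + 1) * (4 * t + 1) := by rw [hNval]; push_cast; ring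
      rw [hnc, hNc]
      have h4 : (4 * (t : ℂ) + 2) ≠ 0 := by rw [← hnc]; exact hnC
      field_simp
      push_cast
      ring
    rw [harg, Complex.exp_add, Complex.exp_nat_mul, Complex.exp_nat_mul,
      Complex.exp_pi_mul_I]
    have : Complex.exp (2 * Real.pi * I) = 1 := by
      simpa using Complex.exp_nat_mul_two_pi_mul_I 1
    rw [this]
    simp
  rw [hsplit, hE]
  have h24 : (n - 2) / 4 = t := by omega
  rw [h24]
  calc Complex.exp ((I * Real.pi / n) * (((n : ℂ) - 1) * n * (n + 1) / 2))
        * ((2 * I) ^ N * ∏ j ∈ Finset.Icc 1 n, ∏ i ∈ Finset.Icc 1 (j - 1),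
            Complex.sin (((Real.pi * j / n - Real.pi * i / n : ℝ)) : ℂ))
      = (Complex.exp ((I * Real.pi / n) * (((n : ℂ) - 1) * n * (n + 1) / 2)) * I ^ N)
        * ((2 : ℂ) ^ N * ∏ j ∈ Finset.Icc 1 n, ∏ i ∈ Finset.Icc 1 (j - 1),
            Complex.sin (((Real.pi * j / n - Real.pi * i / n : ℝ)) : ℂ)) := by
        rw [mul_pow]; ring
    _ = (-1 : ℂ) ^ t * (n : ℂ) ^ (n / 2) := by rw [hunit, hQ]
    _ = (n : ℂ) ^ (n / 2) * (-1) ^ t := by ring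
end

section
/- Let p ≡ 1 (mod 4) be a prime, n = (p-1)/2, and let g be a primitive root modulo p. Then the product over 1 ≤ i < j ≤ n of (g^(2j) - g^(2i)) is congruent modulo p to n^(n/2) · g^((p-1)(3n² - n - 2)/8). -/
open Finset

private lemma icc_eq_ioc (k : ℕ) : Icc 1 k = Ioc 0 k := by
  ext x; simp [Finset.mem_Icc, Finset.mem_Ioc]; omega

private lemma gauss_sum (k : ℕ) : 2 * ∑ i ∈ Ioc 0 k, i = k * (k + 1) := by
  induction k with
  | zero => simp
  | succ k ih => rw [Finset.sum_Ioc_succ_top (Nat.zero_le k), Nat.mul_add, ih]; ring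

private lemma sq_sum (k : ℕ) : 3 * ∑ i ∈ Ioc 0 k, 2 * i * i = k * (k + 1) * (2 * k + 1) := by
  induction k with
  | zero => simp
  | succ k ih => rw [Finset.sum_Ioc_succ_top (Nat.zero_le k), Nat.mul_add, ih]; ring

private lemma S_sum (J : ℕ) :
    3 * ∑ j ∈ Icc 1 J, ∑ i ∈ Icc 1 (j - 1), 2 * i = (J - 1) * J * (J + 1) := by
  induction J with
  | zero => simp
  | succ J ih =>
    rw [Finset.sum_Icc_succ_top (by omega), Nat.add_sub_cancel, Nat.mul_add, ih]
    have h : ∑ i ∈ Icc 1 J, 2 * i = J * (J + 1) := by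
      rw [icc_eq_ioc, ← Finset.mul_sum, gauss_sum]
    rw [h]
    rcases J with _ | J
    · simp
    · simp only [Nat.add_sub_cancel]; ring

theorem stmt_14 (p n : ℕ) (hp : p.Prime) (hp4 : p % 4 = 1) (hpn : p = 2 * n + 1)
    (g : ℤ) (hg : IsPrimitiveRoot (g : ZMod p) (p - 1)) :
    (∏ j ∈ Finset.Icc 1 n, ∏ i ∈ Finset.Icc 1 (j - 1), (g ^ (2 * j) - g ^ (2 * i))) ≡
      (n : ℤ) ^ (n / 2) * g ^ ((p - 1) * (3 * n ^ 2 - n - 2) / 8) [ZMOD p] := by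
  haveI : Fact p.Prime := ⟨hp⟩
  have hp2 : 2 ≤ p := hp.two_le
  have hp5 : 5 ≤ p := by omega
  obtain ⟨k, rfl⟩ : ∃ k, n = 2 * (k + 1) := ⟨n / 2 - 1, by omega⟩
  rw [← ZMod.intCast_eq_intCast_iff]
  push_cast
  set G : ZMod p := (g : ZMod p) with hGdef
  have hpm : p - 1 = 4 * (k + 1) := by omega
  rw [hpm] at hg
  have hG4 : G ^ (4 * (k + 1)) = 1 := hg.pow_eq_one
  have hGne : G ≠ 0 := by
    intro h
    rw [h, zero_pow (by omega)] at hG4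
    exact zero_ne_one hG4
  have hG2 : G ^ (2 * (k + 1)) = -1 := by
    have hsq : G ^ (2 * (k + 1)) * G ^ (2 * (k + 1)) = 1 := by
      rw [← pow_add, show 2 * (k + 1) + 2 * (k + 1) = 4 * (k + 1) by ring]; exact hG4
    rcases mul_self_eq_one_iff.mp hsq with h | h
    · exact absurd h (hg.pow_ne_one_of_pos_of_lt (by omega) (by omega))
    · exact h
  -- exponent simplifications in the goal
  have hhalf : 2 * (k + 1) / 2 = k + 1 := by omega
  have hE : (p - 1) * (3 * (2 * (k + 1)) ^ 2 - 2 * (k + 1) - 2) / 8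
      = 6 * k ^ 3 + 17 * k ^ 2 + 15 * k + 4 := by
    rw [hpm]
    have h2 : (2 * (k + 1)) ^ 2 = 4 * k ^ 2 + 8 * k + 4 := by ring
    have h1 : 3 * (2 * (k + 1)) ^ 2 - 2 * (k + 1) - 2 = 12 * k ^ 2 + 22 * k + 8 := by
      rw [h2]; generalize k ^ 2 = q; omega
    rw [h1, show (4 * (k + 1)) * (12 * k ^ 2 + 22 * k + 8)
        = 8 * (6 * k ^ 3 + 17 * k ^ 2 + 15 * k + 4) by ring]
    exact Nat.mul_div_cancel_left _ (by norm_num)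
  rw [hhalf, hE]
  -- abbreviations (as plain expressions)
  -- σ := ∑ e ∈ Ioc 0 k, e ; W := ∑ e ∈ Ioc 0 k, 2*e*e ; S := double sum
  -- Step 1: factor each column
  have hfac : ∀ j ∈ Icc 1 (2 * (k + 1)),
      (∏ i ∈ Icc 1 (j - 1), (G ^ (2 * j) - G ^ (2 * i)))
        = G ^ (∑ i ∈ Icc 1 (j - 1), 2 * i) * ∏ d ∈ Icc 1 (j - 1), (G ^ (2 * d) - 1) := by
    intro j hj
    rw [mem_Icc] at hj
    have e1 : ∏ i ∈ Icc 1 (j - 1), (G ^ (2 * j) - G ^ (2 * i))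
        = ∏ i ∈ Icc 1 (j - 1), (G ^ (2 * i) * (G ^ (2 * (j - i)) - 1)) := by
      refine Finset.prod_congr rfl fun i hi => ?_
      rw [mem_Icc] at hi
      rw [mul_sub, mul_one, ← pow_add, show 2 * i + 2 * (j - i) = 2 * j by omega]
    have e2 : ∏ i ∈ Icc 1 (j - 1), (G ^ (2 * (j - i)) - 1)
        = ∏ d ∈ Icc 1 (j - 1), (G ^ (2 * d) - 1) := by
      refine Finset.prod_bij' (fun i _ => j - i) (fun d _ => j - d) ?_ ?_ ?_ ?_ ?_
      · intro a ha; simp only [mem_Icc] at ha ⊢; omega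
      · intro a ha; simp only [mem_Icc] at ha ⊢; omega
      · intro a ha; simp only [mem_Icc] at ha; beta_reduce; omega
      · intro a ha; simp only [mem_Icc] at ha; beta_reduce; omega
      · intro a ha; rfl
    rw [e1, Finset.prod_mul_distrib, Finset.prod_pow_eq_pow_sum, e2]
  have hswap : ∏ j ∈ Icc 1 (2 * (k + 1)), ∏ d ∈ Icc 1 (j - 1), (G ^ (2 * d) - 1)
      = ∏ d ∈ Icc 1 (2 * k + 1), (G ^ (2 * d) - 1) ^ (2 * (k + 1) - d) := by
    rw [Finset.prod_comm' (t' := Icc 1 (2 * k + 1))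
      (s' := fun d => Icc (d + 1) (2 * (k + 1))) (by intro x y; simp only [mem_Icc]; omega)]
    refine Finset.prod_congr rfl fun d hd => ?_
    rw [mem_Icc] at hd
    rw [Finset.prod_const, Nat.card_Icc]
    congr 1
    omega
  have hV : (∏ j ∈ Icc 1 (2 * (k + 1)), ∏ i ∈ Icc 1 (j - 1), (G ^ (2 * j) - G ^ (2 * i)))
      = G ^ (∑ j ∈ Icc 1 (2 * (k + 1)), ∑ i ∈ Icc 1 (j - 1), 2 * i)
        * ∏ d ∈ Icc 1 (2 * k + 1), (G ^ (2 * d) - 1) ^ (2 * (k + 1) - d) := by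
    rw [Finset.prod_congr rfl hfac, Finset.prod_mul_distrib, Finset.prod_pow_eq_pow_sum, hswap]
  -- L1 : product of (G^(2d) - 1) over d = 1..2k+1
  have hzeta : IsPrimitiveRoot (G ^ 2) (2 * k + 1 + 1) := by
    have := hg.pow (n := 4 * (k + 1)) (by omega) (show 4 * (k + 1) = 2 * (2 * k + 1 + 1) by ring)
    exact this
  have hL1 : ∏ d ∈ Icc 1 (2 * k + 1), (G ^ (2 * d) - 1) = -(((2 * k + 2 : ℕ)) : ZMod p) := by
    have h0 := hzeta.prod_pow_sub_one_eq_order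
    have hodd : (-1 : ZMod p) ^ (2 * k + 1) = -1 := Odd.neg_one_pow ⟨k, by ring⟩
    rw [hodd] at h0
    have h1 : ∏ d ∈ Icc 1 (2 * k + 1), (G ^ (2 * d) - 1)
        = ∏ i ∈ range (2 * k + 1), ((G ^ 2) ^ (i + 1) - 1) := by
      refine Finset.prod_bij' (fun d _ => d - 1) (fun i _ => i + 1) ?_ ?_ ?_ ?_ ?_
      · intro a ha; simp only [mem_Icc] at ha; simp only [mem_range]; beta_reduce; omega
      · intro a ha; simp only [mem_range] at ha; simp only [mem_Icc]; beta_reduce; omega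
      · intro a ha; simp only [mem_Icc] at ha; beta_reduce; omega
      · intro a ha; simp only [mem_range] at ha; beta_reduce; omega
      · intro a ha; simp only [mem_Icc] at ha
        beta_reduce
        rw [← pow_mul]
        congr 2
        omega
    rw [h1]
    push_cast at h0 ⊢
    linear_combination -h0
  -- generic reflection of the top part
  have htop : ∀ f : ℕ → ZMod p, ∏ d ∈ Ioc (k + 1) (2 * k + 1), f d
      = ∏ e ∈ Ioc 0 k, f (2 * (k + 1) - e) := by
    intro f
    refine Finset.prod_bij' (fun d _ => 2 * (k + 1) - d) (fun e _ => 2 * (k + 1) - e) ?_ ?_ ?_ ?_ ?_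
    · intro a ha; simp only [mem_Ioc] at ha ⊢; beta_reduce; omega
    · intro a ha; simp only [mem_Ioc] at ha ⊢; beta_reduce; omega
    · intro a ha; simp only [mem_Ioc] at ha; beta_reduce; omega
    · intro a ha; simp only [mem_Ioc] at ha; beta_reduce; omega
    · intro a ha; simp only [mem_Ioc] at ha
      beta_reduce
      congr 1
      omega
  -- generic split of Icc 1 (2k+1)
  have hsplit : ∀ f : ℕ → ZMod p, ∏ d ∈ Icc 1 (2 * k + 1), f d
      = ((∏ d ∈ Ioc 0 k, f d) * f (k + 1)) * ∏ e ∈ Ioc 0 k, f (2 * (k + 1) - e) := by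
    intro f
    rw [icc_eq_ioc, ← Finset.prod_Ioc_consecutive f (show (0:ℕ) ≤ k + 1 by omega)
      (show k + 1 ≤ 2 * k + 1 by omega), Finset.prod_Ioc_succ_top (Nat.zero_le k), htop f]
  have hm2 : G ^ (2 * (k + 1)) - 1 = -2 := by rw [hG2]; ring
  have hrefl : ∀ e ∈ Ioc 0 k, (G ^ (2 * (2 * (k + 1) - e)) - 1) * G ^ (2 * e)
      = G ^ (2 * (k + 1)) * (G ^ (2 * e) - 1) := by
    intro e he; simp only [mem_Ioc] at he
    rw [sub_mul, one_mul, ← pow_add,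
      show 2 * (2 * (k + 1) - e) + 2 * e = 4 * (k + 1) by omega, hG4, hG2]
    ring
  -- B := ∏ e ∈ Ioc 0 k, (G^(2e) - 1)
  have hB3 : (∏ e ∈ Ioc 0 k, (G ^ (2 * (2 * (k + 1) - e)) - 1)) * G ^ (2 * ∑ e ∈ Ioc 0 k, e)
      = G ^ (2 * (k + 1) * k) * ∏ e ∈ Ioc 0 k, (G ^ (2 * e) - 1) := by
    rw [show (2 * ∑ e ∈ Ioc 0 k, e) = ∑ e ∈ Ioc 0 k, 2 * e from Finset.mul_sum _ _ _,
      ← Finset.prod_pow_eq_pow_sum, ← Finset.prod_mul_distrib,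
      Finset.prod_congr rfl hrefl, Finset.prod_mul_distrib, Finset.prod_const, Nat.card_Ioc,
      Nat.sub_zero, ← pow_mul]
  have h2ne : ((2 : ℕ) : ZMod p) ≠ 0 := by
    rw [Ne, ZMod.natCast_eq_zero_iff]
    intro hdvd
    have := Nat.le_of_dvd (by norm_num) hdvd
    omega
  have h2ne' : (-2 : ZMod p) ≠ 0 := by
    intro h
    apply h2ne
    push_cast
    linear_combination -h
  have hB2 : (∏ e ∈ Ioc 0 k, (G ^ (2 * e) - 1)) ^ 2 * G ^ (2 * (k + 1) * k)
      = ((k + 1 : ℕ) : ZMod p) * G ^ (2 * ∑ e ∈ Ioc 0 k, e) := by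
    have h0 := hsplit (fun d => G ^ (2 * d) - 1)
    beta_reduce at h0
    rw [hL1, hm2] at h0
    have h1 : (∏ e ∈ Ioc 0 k, (G ^ (2 * e) - 1)) * -2
        * ((∏ e ∈ Ioc 0 k, (G ^ (2 * (2 * (k + 1) - e)) - 1)) * G ^ (2 * ∑ e ∈ Ioc 0 k, e))
        = -(((2 * k + 2 : ℕ)) : ZMod p) * G ^ (2 * ∑ e ∈ Ioc 0 k, e) := by
      linear_combination (-(G ^ (2 * ∑ e ∈ Ioc 0 k, e))) * h0
    rw [hB3] at h1
    have hcast : -(((2 * k + 2 : ℕ)) : ZMod p) = -2 * ((k + 1 : ℕ) : ZMod p) := by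
      push_cast; ring
    rw [hcast] at h1
    refine mul_left_cancel₀ h2ne' ?_
    linear_combination h1
  have hRR : (∏ e ∈ Ioc 0 k, (G ^ (2 * (2 * (k + 1) - e)) - 1) ^ e)
        * G ^ (∑ e ∈ Ioc 0 k, 2 * e * e)
      = G ^ (2 * (k + 1) * ∑ e ∈ Ioc 0 k, e) * ∏ e ∈ Ioc 0 k, (G ^ (2 * e) - 1) ^ e := by
    rw [← Finset.prod_pow_eq_pow_sum, ← Finset.prod_mul_distrib]
    have hterm : ∀ e ∈ Ioc 0 k, (G ^ (2 * (2 * (k + 1) - e)) - 1) ^ e * G ^ (2 * e * e)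
        = (G ^ (2 * (k + 1))) ^ e * (G ^ (2 * e) - 1) ^ e := by
      intro e he
      rw [pow_mul G (2 * e) e, ← mul_pow, hrefl e he, mul_pow]
    rw [Finset.prod_congr rfl hterm, Finset.prod_mul_distrib, Finset.prod_pow_eq_pow_sum,
      ← pow_mul]
  -- split R
  have hsplitR := hsplit (fun d => (G ^ (2 * d) - 1) ^ (2 * (k + 1) - d))
  beta_reduce at hsplitR
  rw [show 2 * (k + 1) - (k + 1) = k + 1 by omega, hm2] at hsplitR
  have hexp3 : ∏ e ∈ Ioc 0 k, (G ^ (2 * (2 * (k + 1) - e)) - 1) ^ (2 * (k + 1) - (2 * (k + 1) - e))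
      = ∏ e ∈ Ioc 0 k, (G ^ (2 * (2 * (k + 1) - e)) - 1) ^ e := by
    refine Finset.prod_congr rfl fun e he => ?_
    simp only [mem_Ioc] at he
    congr 1
    omega
  rw [hexp3] at hsplitR
  have hR1B : (∏ e ∈ Ioc 0 k, (G ^ (2 * e) - 1) ^ (2 * (k + 1) - e))
        * ∏ e ∈ Ioc 0 k, (G ^ (2 * e) - 1) ^ e
      = ((∏ e ∈ Ioc 0 k, (G ^ (2 * e) - 1)) ^ 2) ^ (k + 1) := by
    rw [← Finset.prod_mul_distrib, ← pow_mul, ← Finset.prod_pow]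
    refine Finset.prod_congr rfl fun e he => ?_
    simp only [mem_Ioc] at he
    rw [← pow_add]
    congr 1
    omega
  have hneg2 : (-2 : ZMod p) ^ (k + 1) = G ^ (2 * (k + 1) * (k + 1)) * 2 ^ (k + 1) := by
    rw [show (-2 : ZMod p) = G ^ (2 * (k + 1)) * 2 by rw [hG2]; ring, mul_pow, ← pow_mul]
  have hB2pow : ((∏ e ∈ Ioc 0 k, (G ^ (2 * e) - 1)) ^ 2) ^ (k + 1)
        * G ^ (2 * (k + 1) * k * (k + 1))
      = ((k + 1 : ℕ) : ZMod p) ^ (k + 1) * G ^ ((2 * ∑ e ∈ Ioc 0 k, e) * (k + 1)) := by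
    have h0 := congrArg (· ^ (k + 1)) hB2
    simp only [mul_pow, ← pow_mul] at h0
    rw [← pow_mul]
    exact h0
  -- closed forms of the sums, over ℤ
  have hσZ : 2 * ((∑ e ∈ Ioc 0 k, e : ℕ) : ℤ) = k * (k + 1) := by exact_mod_cast gauss_sum k
  have hWZ : 3 * ((∑ e ∈ Ioc 0 k, 2 * e * e : ℕ) : ℤ) = k * (k + 1) * (2 * k + 1) := by
    exact_mod_cast sq_sum k
  have hSZ : 3 * ((∑ j ∈ Icc 1 (2 * (k + 1)), ∑ i ∈ Icc 1 (j - 1), 2 * i : ℕ) : ℤ)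
      = (2 * k + 1) * (2 * (k + 1)) * (2 * (k + 1) + 1) := by
    have h0 := S_sum (2 * (k + 1))
    rw [show 2 * (k + 1) - 1 = 2 * k + 1 by omega] at h0
    exact_mod_cast h0
  have key : 6 * k ^ 3 + 17 * k ^ 2 + 15 * k + 4
        + ((∑ e ∈ Ioc 0 k, 2 * e * e) + 2 * (k + 1) * k * (k + 1))
      = ((∑ j ∈ Icc 1 (2 * (k + 1)), ∑ i ∈ Icc 1 (j - 1), 2 * i)
          + (2 * (k + 1) * (k + 1) + 2 * (k + 1) * (∑ e ∈ Ioc 0 k, e)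
            + (2 * ∑ e ∈ Ioc 0 k, e) * (k + 1)))
        + 4 * (k + 1) * (2 * ∑ e ∈ Ioc 0 k, e) := by
    have h3 : (3:ℤ) * ((6 * k ^ 3 + 17 * k ^ 2 + 15 * k + 4 : ℕ)
          + (((∑ e ∈ Ioc 0 k, 2 * e * e : ℕ) : ℤ) + 2 * (k + 1) * k * (k + 1)))
        = 3 * (((∑ j ∈ Icc 1 (2 * (k + 1)), ∑ i ∈ Icc 1 (j - 1), 2 * i : ℕ) : ℤ)
          + (2 * (k + 1) * (k + 1) + 2 * (k + 1) * ((∑ e ∈ Ioc 0 k, e : ℕ) : ℤ)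
            + (2 * ((∑ e ∈ Ioc 0 k, e : ℕ) : ℤ)) * (k + 1))
          + 4 * (k + 1) * (2 * ((∑ e ∈ Ioc 0 k, e : ℕ) : ℤ))) := by
      push_cast at hσZ hWZ hSZ ⊢
      linear_combination hWZ - hSZ - 18 * ((k:ℤ) + 1) * hσZ
    have h4 := mul_left_cancel₀ (show (3:ℤ) ≠ 0 by norm_num) h3
    exact_mod_cast h4
  -- final assembly
  have hGkey : G ^ (6 * k ^ 3 + 17 * k ^ 2 + 15 * k + 4
        + ((∑ e ∈ Ioc 0 k, 2 * e * e) + 2 * (k + 1) * k * (k + 1)))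
      = G ^ ((∑ j ∈ Icc 1 (2 * (k + 1)), ∑ i ∈ Icc 1 (j - 1), 2 * i)
        + (2 * (k + 1) * (k + 1) + 2 * (k + 1) * (∑ e ∈ Ioc 0 k, e)
          + (2 * ∑ e ∈ Ioc 0 k, e) * (k + 1))) := by
    rw [key, pow_add, pow_mul, hG4, one_pow, mul_one]
  refine mul_right_cancel₀ (b := G ^ (∑ e ∈ Ioc 0 k, 2 * e * e)
    * G ^ (2 * (k + 1) * k * (k + 1))) (mul_ne_zero (pow_ne_zero _ hGne) (pow_ne_zero _ hGne)) ?_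
  rw [hV, hsplitR]
  calc ((G ^ ∑ j ∈ Icc 1 (2 * (k + 1)), ∑ i ∈ Icc 1 (j - 1), 2 * i)
          * ((∏ e ∈ Ioc 0 k, (G ^ (2 * e) - 1) ^ (2 * (k + 1) - e)) * (-2) ^ (k + 1)
            * ∏ e ∈ Ioc 0 k, (G ^ (2 * (2 * (k + 1) - e)) - 1) ^ e))
        * (G ^ (∑ e ∈ Ioc 0 k, 2 * e * e) * G ^ (2 * (k + 1) * k * (k + 1)))
      = (G ^ ∑ j ∈ Icc 1 (2 * (k + 1)), ∑ i ∈ Icc 1 (j - 1), 2 * i) * (-2) ^ (k + 1)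
          * ((∏ e ∈ Ioc 0 k, (G ^ (2 * (2 * (k + 1) - e)) - 1) ^ e)
            * G ^ (∑ e ∈ Ioc 0 k, 2 * e * e))
          * (∏ e ∈ Ioc 0 k, (G ^ (2 * e) - 1) ^ (2 * (k + 1) - e))
          * G ^ (2 * (k + 1) * k * (k + 1)) := by ring
    _ = (G ^ ∑ j ∈ Icc 1 (2 * (k + 1)), ∑ i ∈ Icc 1 (j - 1), 2 * i) * (-2) ^ (k + 1)
          * (G ^ (2 * (k + 1) * ∑ e ∈ Ioc 0 k, e) * ∏ e ∈ Ioc 0 k, (G ^ (2 * e) - 1) ^ e)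
          * (∏ e ∈ Ioc 0 k, (G ^ (2 * e) - 1) ^ (2 * (k + 1) - e))
          * G ^ (2 * (k + 1) * k * (k + 1)) := by rw [hRR]
    _ = (G ^ ∑ j ∈ Icc 1 (2 * (k + 1)), ∑ i ∈ Icc 1 (j - 1), 2 * i) * (-2) ^ (k + 1)
          * G ^ (2 * (k + 1) * ∑ e ∈ Ioc 0 k, e)
          * ((∏ e ∈ Ioc 0 k, (G ^ (2 * e) - 1) ^ (2 * (k + 1) - e))
            * ∏ e ∈ Ioc 0 k, (G ^ (2 * e) - 1) ^ e)
          * G ^ (2 * (k + 1) * k * (k + 1)) := by ring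
    _ = (G ^ ∑ j ∈ Icc 1 (2 * (k + 1)), ∑ i ∈ Icc 1 (j - 1), 2 * i) * (-2) ^ (k + 1)
          * G ^ (2 * (k + 1) * ∑ e ∈ Ioc 0 k, e)
          * (((∏ e ∈ Ioc 0 k, (G ^ (2 * e) - 1)) ^ 2) ^ (k + 1)
            * G ^ (2 * (k + 1) * k * (k + 1))) := by rw [hR1B]; ring
    _ = (G ^ ∑ j ∈ Icc 1 (2 * (k + 1)), ∑ i ∈ Icc 1 (j - 1), 2 * i) * (-2) ^ (k + 1)
          * G ^ (2 * (k + 1) * ∑ e ∈ Ioc 0 k, e)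
          * (((k + 1 : ℕ) : ZMod p) ^ (k + 1)
            * G ^ ((2 * ∑ e ∈ Ioc 0 k, e) * (k + 1))) := by rw [hB2pow]
    _ = 2 ^ (k + 1) * ((k + 1 : ℕ) : ZMod p) ^ (k + 1)
          * ((G ^ ∑ j ∈ Icc 1 (2 * (k + 1)), ∑ i ∈ Icc 1 (j - 1), 2 * i)
            * (G ^ (2 * (k + 1) * (k + 1)) * G ^ (2 * (k + 1) * ∑ e ∈ Ioc 0 k, e)
              * G ^ ((2 * ∑ e ∈ Ioc 0 k, e) * (k + 1)))) := by rw [hneg2]; ring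
    _ = 2 ^ (k + 1) * ((k + 1 : ℕ) : ZMod p) ^ (k + 1)
          * G ^ ((∑ j ∈ Icc 1 (2 * (k + 1)), ∑ i ∈ Icc 1 (j - 1), 2 * i)
            + (2 * (k + 1) * (k + 1) + 2 * (k + 1) * (∑ e ∈ Ioc 0 k, e)
              + (2 * ∑ e ∈ Ioc 0 k, e) * (k + 1))) := by
        ring
    _ = 2 ^ (k + 1) * ((k + 1 : ℕ) : ZMod p) ^ (k + 1)
          * G ^ (6 * k ^ 3 + 17 * k ^ 2 + 15 * k + 4
            + ((∑ e ∈ Ioc 0 k, 2 * e * e) + 2 * (k + 1) * k * (k + 1))) := by rw [← hGkey]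
    _ = 2 ^ (k + 1) * ((k + 1 : ℕ) : ZMod p) ^ (k + 1)
          * (G ^ (6 * k ^ 3 + 17 * k ^ 2 + 15 * k + 4)
            * (G ^ (∑ e ∈ Ioc 0 k, 2 * e * e) * G ^ (2 * (k + 1) * k * (k + 1)))) := by
        rw [pow_add G (6 * k ^ 3 + 17 * k ^ 2 + 15 * k + 4)
          ((∑ e ∈ Ioc 0 k, 2 * e * e) + 2 * (k + 1) * k * (k + 1)),
          pow_add G (∑ e ∈ Ioc 0 k, 2 * e * e) (2 * (k + 1) * k * (k + 1))]
    _ = (2 * ((k:ZMod p) + 1)) ^ (k + 1) * G ^ (6 * k ^ 3 + 17 * k ^ 2 + 15 * k + 4)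
          * (G ^ (∑ e ∈ Ioc 0 k, 2 * e * e) * G ^ (2 * (k + 1) * k * (k + 1))) := by
        rw [mul_pow]
        push_cast
        ring
end

section
/- Let p ≡ 1 (mod 4) be a prime, n = (p-1)/2, and let 1 = a_1 < a_2 < ... < a_n ≤ p-1 be the quadratic residues mod p in increasing order. Then the product over 1 ≤ i < j ≤ n of (a_j - a_i) is congruent modulo p to (-1)^(r_p*) · (n!)^((p-5)/4) · s_p, where s_p is the product of all quadratic nonresidues k with 1 ≤ k ≤ n and r_p* = #{(x,y) : 1 ≤ x,y ≤ n, x+y ≤ n, (x/p) = (y/p) = 1}. -/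
open Finset

private lemma sumA17 (p : ℕ) [Fact p.Prime] (hp2 : p ≠ 2) (γ : ZMod p) (hγ : γ ≠ 0) :
    ∑ x : ZMod p, quadraticChar (ZMod p) (x * (γ - x)) =
      - quadraticChar (ZMod p) (-1) := by
  have h0 : quadraticChar (ZMod p) (0 * (γ - 0)) = 0 := by
    rw [zero_mul]; exact quadraticChar_zero
  rw [← Finset.sum_erase_add _ _ (Finset.mem_univ (0 : ZMod p)), h0, add_zero]
  have step1 : ∀ x ∈ Finset.univ.erase (0 : ZMod p),
      quadraticChar (ZMod p) (x * (γ - x)) = quadraticChar (ZMod p) (γ * x⁻¹ - 1) := by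
    intro x hx
    have hx0 : x ≠ 0 := Finset.mem_erase.1 hx |>.1
    have : x * (γ - x) = x ^ 2 * (γ * x⁻¹ - 1) := by field_simp
    rw [this, map_mul, quadraticChar_sq_one' hx0, one_mul]
  rw [Finset.sum_congr rfl step1]
  have step2 : ∑ x ∈ Finset.univ.erase (0 : ZMod p), quadraticChar (ZMod p) (γ * x⁻¹ - 1)
      = ∑ y ∈ Finset.univ.erase (0 : ZMod p), quadraticChar (ZMod p) (y - 1) := by
    apply Finset.sum_nbij' (fun x => γ * x⁻¹) (fun y => γ * y⁻¹)
    · intro x hx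
      simp only [Finset.mem_erase, Finset.mem_univ, and_true] at hx ⊢
      exact mul_ne_zero hγ (inv_ne_zero hx)
    · intro y hy
      simp only [Finset.mem_erase, Finset.mem_univ, and_true] at hy ⊢
      exact mul_ne_zero hγ (inv_ne_zero hy)
    · intro x hx
      simp only [Finset.mem_erase, Finset.mem_univ, and_true] at hx
      field_simp
    · intro y hy
      simp only [Finset.mem_erase, Finset.mem_univ, and_true] at hy
      field_simp
    · intro x hx; rfl
  rw [step2]
  have step3 : ∑ y ∈ Finset.univ.erase (0 : ZMod p), quadraticChar (ZMod p) (y - 1)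
      = ∑ z ∈ Finset.univ.erase (-1 : ZMod p), quadraticChar (ZMod p) z := by
    apply Finset.sum_nbij' (fun y => y - 1) (fun z => z + 1)
    · intro x hx
      simp only [Finset.mem_erase, Finset.mem_univ, and_true] at hx ⊢
      intro h; apply hx; linear_combination h
    · intro z hz
      simp only [Finset.mem_erase, Finset.mem_univ, and_true] at hz ⊢
      intro h; apply hz; linear_combination h
    · intro x _; ring
    · intro z _; ring
    · intro x _; rfl
  rw [step3]
  have hchar : ringChar (ZMod p) ≠ 2 := by
    rw [ZMod.ringChar_zmod_n]; exact hp2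
  have := quadraticChar_sum_zero hchar
  rw [← Finset.sum_erase_add _ _ (Finset.mem_univ (-1 : ZMod p))] at this
  linarith [this]

private lemma countB17 (p : ℕ) [Fact p.Prime] (hp4 : p % 4 = 1) (γ : ZMod p) (hγ : γ ≠ 0) :
    4 * ((Finset.univ.filter (fun x : ZMod p =>
        x ≠ 0 ∧ IsSquare x ∧ γ - x ≠ 0 ∧ IsSquare (γ - x))).card : ℤ) =
      p - 3 - 2 * quadraticChar (ZMod p) γ := by
  have hp2 : p ≠ 2 := by intro h; rw [h] at hp4; norm_num at hp4
  have hprime := (Fact.out : p.Prime)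
  have hp5 : 5 ≤ p := by
    rcases Nat.lt_or_ge p 5 with h | h
    · interval_cases p <;> revert hprime hp4 <;> decide
    · exact h
  haveI : NeZero p := ⟨by omega⟩
  have hchar : ringChar (ZMod p) ≠ 2 := by rw [ZMod.ringChar_zmod_n]; exact hp2
  set χ := quadraticChar (ZMod p) with hχ
  set T : Finset (ZMod p) := (Finset.univ.erase γ).erase 0 with hT
  have h0T : (0 : ZMod p) ∈ Finset.univ.erase γ := by simp [Ne.symm hγ]
  have key : ∀ x ∈ T, (1 + χ x) * (1 + χ (γ - x)) =
      if (IsSquare x ∧ IsSquare (γ - x)) then 4 else 0 := by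
    intro x hx
    have hx0 : x ≠ 0 := (Finset.mem_erase.1 hx).1
    have hxγ : γ - x ≠ 0 := by
      have h2 := (Finset.mem_erase.1 (Finset.mem_erase.1 hx).2).1
      intro h; apply h2; linear_combination -h
    rcases quadraticChar_dichotomy (F := ZMod p) hx0 with h1 | h1 <;>
      rcases quadraticChar_dichotomy (F := ZMod p) hxγ with h2 | h2
    · rw [if_pos ⟨(quadraticChar_one_iff_isSquare hx0).1 h1,
        (quadraticChar_one_iff_isSquare hxγ).1 h2⟩, hχ, h1, h2]; ring
    · rw [if_neg (fun hc => by
        exact absurd h2 (by rw [(quadraticChar_one_iff_isSquare hxγ).2 hc.2]; norm_num)),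
        hχ, h1, h2]; ring
    · rw [if_neg (fun hc => by
        exact absurd h1 (by rw [(quadraticChar_one_iff_isSquare hx0).2 hc.1]; norm_num)),
        hχ, h1, h2]; ring
    · rw [if_neg (fun hc => by
        exact absurd h1 (by rw [(quadraticChar_one_iff_isSquare hx0).2 hc.1]; norm_num)),
        hχ, h1, h2]; ring
  have hset : Finset.univ.filter (fun x : ZMod p =>
      x ≠ 0 ∧ IsSquare x ∧ γ - x ≠ 0 ∧ IsSquare (γ - x)) =
      T.filter (fun x => IsSquare x ∧ IsSquare (γ - x)) := by
    ext x
    simp only [Finset.mem_filter, Finset.mem_univ, true_and, hT, Finset.mem_erase]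
    constructor
    · rintro ⟨h1, h2, h3, h4⟩
      exact ⟨⟨h1, by intro h; apply h3; rw [h]; ring, trivial⟩, h2, h4⟩
    · rintro ⟨⟨h1, h5, -⟩, h2, h4⟩
      refine ⟨h1, h2, ?_, h4⟩
      intro h; apply h5; linear_combination γ - h
  have hsum1 : ∑ x ∈ T, (1 + χ x) * (1 + χ (γ - x)) =
      4 * ((T.filter (fun x => IsSquare x ∧ IsSquare (γ - x))).card : ℤ) := by
    rw [Finset.sum_congr rfl key, Finset.sum_ite, Finset.sum_const, Finset.sum_const]
    simp [mul_comm]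
  have hsum2 : ∑ x ∈ T, (1 + χ x) * (1 + χ (γ - x)) =
      (T.card : ℤ) + (∑ x ∈ T, χ x) + (∑ x ∈ T, χ (γ - x)) + ∑ x ∈ T, χ x * χ (γ - x) := by
    rw [Finset.sum_congr rfl (fun x _ => by ring :
      ∀ x ∈ T, (1 + χ x) * (1 + χ (γ - x)) = 1 + χ x + χ (γ - x) + χ x * χ (γ - x))]
    rw [Finset.sum_add_distrib, Finset.sum_add_distrib, Finset.sum_add_distrib,
      Finset.sum_const]
    simp
  have hcardT : (T.card : ℤ) = p - 2 := by
    have h1 : T.card = p - 2 := by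
      rw [hT, Finset.card_erase_of_mem h0T, Finset.card_erase_of_mem (Finset.mem_univ γ),
        Finset.card_univ, ZMod.card]
      omega
    rw [h1]; push_cast; omega
  have hsumzero : ∑ x : ZMod p, χ x = 0 := quadraticChar_sum_zero hchar
  have hsumT : ∑ x ∈ T, χ x = - χ γ := by
    have e1 : ∑ x ∈ T, χ x + χ 0 = ∑ x ∈ Finset.univ.erase γ, χ x :=
      Finset.sum_erase_add _ _ h0T
    have e2 : ∑ x ∈ Finset.univ.erase γ, χ x + χ γ = ∑ x : ZMod p, χ x :=
      Finset.sum_erase_add _ _ (Finset.mem_univ γ)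
    rw [hsumzero] at e2
    rw [hχ] at e1 ⊢
    rw [quadraticChar_zero] at e1
    linarith
  have hsumT2 : ∑ x ∈ T, χ (γ - x) = - χ γ := by
    rw [← hsumT]
    apply Finset.sum_nbij' (fun x => γ - x) (fun x => γ - x)
    · intro x hx
      simp only [hT, Finset.mem_erase, Finset.mem_univ, and_true] at hx ⊢
      refine ⟨?_, ?_⟩
      · intro h; exact hx.2 (by linear_combination -h)
      · intro h; exact hx.1 (by linear_combination -h)
    · intro x hx
      simp only [hT, Finset.mem_erase, Finset.mem_univ, and_true] at hx ⊢
      refine ⟨?_, ?_⟩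
      · intro h; exact hx.2 (by linear_combination -h)
      · intro h; exact hx.1 (by linear_combination -h)
    · intro x _; ring
    · intro x _; ring
    · intro x _; rfl
  have hsumT3 : ∑ x ∈ T, χ x * χ (γ - x) = -1 := by
    have e0 : ∀ x ∈ T, χ x * χ (γ - x) = χ (x * (γ - x)) := by
      intro x _; rw [hχ, map_mul]
    rw [Finset.sum_congr rfl e0]
    have e1 : ∑ x ∈ T, χ (x * (γ - x)) + χ (0 * (γ - 0)) =
        ∑ x ∈ Finset.univ.erase γ, χ (x * (γ - x)) :=
      Finset.sum_erase_add _ _ h0T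
    have e2 : ∑ x ∈ Finset.univ.erase γ, χ (x * (γ - x)) + χ (γ * (γ - γ)) =
        ∑ x : ZMod p, χ (x * (γ - x)) :=
      Finset.sum_erase_add _ _ (Finset.mem_univ γ)
    have e3 : χ (0 * (γ - 0)) = 0 := by rw [zero_mul, hχ, quadraticChar_zero]
    have e4 : χ (γ * (γ - γ)) = 0 := by rw [sub_self, mul_zero, hχ, quadraticChar_zero]
    have e5 := sumA17 p hp2 γ hγ
    have hm1 : χ (-1) = 1 := by
      rw [hχ]
      refine (quadraticChar_one_iff_isSquare ?_).2 ?_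
      · exact neg_ne_zero.mpr one_ne_zero
      · exact (ZMod.exists_sq_eq_neg_one_iff (p := p)).2 (by omega)
    rw [← hχ] at e5
    rw [hm1] at e5
    linarith
  rw [hset]
  have := hsum1.symm.trans hsum2
  rw [hcardT, hsumT, hsumT2, hsumT3] at this
  linarith

set_option maxHeartbeats 1000000 in
theorem stmt_17 (p n : ℕ) [Fact p.Prime] (hp4 : p % 4 = 1) (hpn : p = 2 * n + 1)
    (a : Fin n → ℕ) (hmono : StrictMono a)
    (hQR : ∀ i, a i ∈ Finset.Icc 1 (p - 1) ∧ legendreSym p (a i : ℤ) = 1)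
    (hsurj : ∀ m ∈ Finset.Icc 1 (p - 1), legendreSym p (m : ℤ) = 1 → ∃ i, a i = m) :
    (∏ j : Fin n, ∏ i ∈ Finset.univ.filter (fun i : Fin n => i < j),
        ((a j : ℤ) - (a i : ℤ))) ≡
      (-1) ^ (((Finset.Icc 1 n ×ˢ Finset.Icc 1 n).filter
          (fun q : ℕ × ℕ => q.1 + q.2 ≤ n ∧
            legendreSym p (q.1 : ℤ) = 1 ∧ legendreSym p (q.2 : ℤ) = 1)).card) *
        (n.factorial : ℤ) ^ ((p - 5) / 4) *
        ∏ k ∈ (Finset.Icc 1 n).filter (fun k : ℕ => legendreSym p (k : ℤ) = -1), (k : ℤ)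
      [ZMOD p] := by
  have hprime := (Fact.out : p.Prime)
  have hp5 : 5 ≤ p := by
    rcases Nat.lt_or_ge p 5 with h | h
    · interval_cases p <;> revert hprime hp4 <;> decide
    · exact h
  have hp2 : p ≠ 2 := by omega
  haveI : NeZero p := ⟨by omega⟩
  obtain ⟨m, hm⟩ : ∃ m, n = 2 * m := ⟨n / 2, by omega⟩
  have hm1 : 1 ≤ m := by omega
  have hQC : ∀ b : ℤ, legendreSym p b = quadraticChar (ZMod p) (b : ZMod p) := fun _ => rfl
  have hnegleg : ∀ k : ℕ, 1 ≤ k → k ≤ p - 1 →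
      legendreSym p ((p - k : ℕ) : ℤ) = legendreSym p (k : ℤ) := by
    intro k hk1 hk2
    rw [hQC, hQC]
    have hcast : (((p - k : ℕ) : ℤ) : ZMod p) = (-1) * (((k : ℕ) : ℤ) : ZMod p) := by
      push_cast [Nat.cast_sub (by omega : k ≤ p)]
      rw [ZMod.natCast_self]
      ring
    rw [hcast, map_mul]
    have hneg1 : quadraticChar (ZMod p) (-1) = 1 := by
      refine (quadraticChar_one_iff_isSquare (neg_ne_zero.mpr one_ne_zero)).2 ?_
      exact (ZMod.exists_sq_eq_neg_one_iff (p := p)).2 (by omega)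
    rw [hneg1, one_mul]
  set S : Finset ℕ := (Finset.Icc 1 (p-1)).filter (fun k : ℕ => legendreSym p (k:ℤ) = 1)
    with hSdef
  set Q : Finset ℕ := (Finset.Icc 1 n).filter (fun k : ℕ => legendreSym p (k:ℤ) = 1)
    with hQdef
  have hSmem : ∀ k : ℕ, k ∈ S ↔ 1 ≤ k ∧ k ≤ p - 1 ∧ legendreSym p (k:ℤ) = 1 := by
    intro k; rw [hSdef]; simp [Finset.mem_filter, Finset.mem_Icc]; tauto
  have hQmem : ∀ k : ℕ, k ∈ Q ↔ 1 ≤ k ∧ k ≤ n ∧ legendreSym p (k:ℤ) = 1 := by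
    intro k; rw [hQdef]; simp [Finset.mem_filter, Finset.mem_Icc]; tauto
  set fold : ℕ → ℕ := fun t => min (t % p) (p - t % p) with hfolddef
  have hfold_low : ∀ t : ℕ, t ≤ n → fold t = t := by
    intro t ht
    rw [hfolddef]
    simp only
    rw [Nat.mod_eq_of_lt (by omega), Nat.min_def]
    split_ifs <;> omega
  have hfold_mid : ∀ t : ℕ, n < t → t < p → fold t = p - t := by
    intro t ht1 ht2
    rw [hfolddef]
    simp only
    rw [Nat.mod_eq_of_lt (by omega), Nat.min_def]
    split_ifs <;> omega
  have hfold_hi : ∀ t : ℕ, p < t → t ≤ p + n → fold t = t - p := by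
    intro t ht1 ht2
    have hmod : t % p = t - p := by
      rw [Nat.mod_eq_sub_mod (by omega), Nat.mod_eq_of_lt (by omega)]
    rw [hfolddef]
    simp only
    rw [hmod, Nat.min_def]
    split_ifs <;> omega
  clear_value fold
  set PS : Finset (ℕ × ℕ) := (S ×ˢ S).filter (fun q : ℕ × ℕ => q.1 < q.2) with hPSdef
  set PQ : Finset (ℕ × ℕ) := (Q ×ˢ Q).filter (fun q : ℕ × ℕ => q.1 < q.2) with hPQdef
  set F1 : Finset (ℕ × ℕ) := (Q ×ˢ Q).filter (fun q : ℕ × ℕ => q.1 + q.2 ≤ n) with hF1def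
  set B0 : Finset (ℕ × ℕ) := (Q ×ˢ S).filter (fun q : ℕ × ℕ => q.1 + q.2 ≠ p) with hB0def
  set E : ℕ := ∏ q ∈ PQ, (q.2 - q.1) with hEdef
  set Y : ℕ := ∏ q ∈ Q ×ˢ Q, fold (q.1 + q.2) with hYdef
  set q0 : ℕ := ∏ k ∈ Q, k with hq0def
  set s0 : ℕ := ∏ k ∈ (Finset.Icc 1 n).filter (fun k : ℕ => legendreSym p (k : ℤ) = -1), k
    with hs0def
  -- step A : LHS as product over PS
  have hLHS : (∏ j : Fin n, ∏ i ∈ Finset.univ.filter (fun i : Fin n => i < j),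
      ((a j : ℤ) - (a i : ℤ))) = ∏ q ∈ PS, ((q.2 : ℤ) - (q.1 : ℤ)) := by
    rw [Finset.prod_sigma']
    apply Finset.prod_nbij (fun x => ((a x.2 : ℕ), (a x.1 : ℕ)))
    · rintro ⟨j, i⟩ hx
      rw [Finset.mem_sigma] at hx
      have hlt : i < j := by simpa using hx.2
      rw [hPSdef, Finset.mem_filter, Finset.mem_product]
      have h1 := (hQR i).1
      have h2 := (hQR j).1
      rw [Finset.mem_Icc] at h1 h2
      exact ⟨⟨(hSmem _).2 ⟨h1.1, h1.2, (hQR i).2⟩, (hSmem _).2 ⟨h2.1, h2.2, (hQR j).2⟩⟩,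
        hmono hlt⟩
    · rintro ⟨x1, x2⟩ - ⟨y1, y2⟩ - h
      simp only [Prod.mk.injEq] at h
      have e1 : x1 = y1 := hmono.injective h.2
      have e2 : x2 = y2 := hmono.injective h.1
      subst e1; subst e2; rfl
    · intro q hq
      rw [Finset.mem_coe, hPSdef, Finset.mem_filter, Finset.mem_product] at hq
      obtain ⟨⟨hq1, hq2⟩, hlt⟩ := hq
      rw [hSmem] at hq1 hq2
      obtain ⟨i1, hi1⟩ := hsurj q.1 (Finset.mem_Icc.2 ⟨hq1.1, hq1.2.1⟩) hq1.2.2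
      obtain ⟨i2, hi2⟩ := hsurj q.2 (Finset.mem_Icc.2 ⟨hq2.1, hq2.2.1⟩) hq2.2.2
      refine ⟨⟨i2, i1⟩, ?_, ?_⟩
      · rw [Finset.mem_coe, Finset.mem_sigma]
        refine ⟨Finset.mem_univ _, ?_⟩
        rw [Finset.mem_filter]
        refine ⟨Finset.mem_univ _, ?_⟩
        rw [← hmono.lt_iff_lt]
        rw [hi1, hi2]; exact hlt
      · simp only [hi1, hi2]
    · intro x hx; rfl
  -- step B : split PS into three parts
  have hsplit : ∏ q ∈ PS, ((q.2 : ℤ) - (q.1 : ℤ)) =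
      (E : ℤ)^2 * ∏ q ∈ Q ×ˢ Q, ((p : ℤ) - q.1 - q.2) := by
    have hEcast : ((E : ℕ) : ℤ) = ∏ q ∈ PQ, ((q.2 : ℤ) - (q.1 : ℤ)) := by
      rw [hEdef]
      push_cast
      refine Finset.prod_congr rfl (fun q hq => ?_)
      have hlt : q.1 < q.2 := (Finset.mem_filter.1 hq).2
      push_cast [Nat.cast_sub hlt.le]
      ring
    have h1 := Finset.prod_filter_mul_prod_filter_not PS (fun q : ℕ × ℕ => n < q.1)
      (fun q : ℕ × ℕ => ((q.2 : ℤ) - (q.1 : ℤ)))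
    have h2 := Finset.prod_filter_mul_prod_filter_not
      (PS.filter (fun q : ℕ × ℕ => ¬ n < q.1))
      (fun q : ℕ × ℕ => q.2 ≤ n) (fun q : ℕ × ℕ => ((q.2 : ℤ) - (q.1 : ℤ)))
    have e2 : (PS.filter (fun q : ℕ × ℕ => ¬ n < q.1)).filter
        (fun q : ℕ × ℕ => q.2 ≤ n) = PQ := by
      ext x
      simp only [hPSdef, hPQdef, Finset.mem_filter, Finset.mem_product]
      rw [hSmem x.1, hSmem x.2, hQmem x.1, hQmem x.2]
      constructor
      · intro h
        exact ⟨⟨⟨h.1.1.1.1.1, by omega, h.1.1.1.1.2.2⟩,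
          ⟨h.1.1.1.2.1, h.2, h.1.1.1.2.2.2⟩⟩, h.1.1.2⟩
      · intro h
        exact ⟨⟨⟨⟨⟨h.1.1.1, by omega, h.1.1.2.2⟩, ⟨h.1.2.1, by omega, h.1.2.2.2⟩⟩, h.2⟩,
          by omega⟩, h.1.2.2.1⟩
    have e1 : ∏ q ∈ PS.filter (fun q : ℕ × ℕ => n < q.1), ((q.2 : ℤ) - (q.1 : ℤ)) =
        ∏ q ∈ PQ, ((q.2 : ℤ) - (q.1 : ℤ)) := by
      apply Finset.prod_nbij' (fun q : ℕ × ℕ => (p - q.2, p - q.1))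
        (fun q : ℕ × ℕ => (p - q.2, p - q.1))
      · intro x hx
        simp only [hPSdef, Finset.mem_filter, Finset.mem_product] at hx
        obtain ⟨⟨⟨hu, hv⟩, hlt⟩, hbig⟩ := hx
        rw [hSmem] at hu hv
        simp only [hPQdef, Finset.mem_filter, Finset.mem_product]
        rw [hQmem, hQmem]
        refine ⟨⟨⟨by omega, by omega, ?_⟩, ⟨by omega, by omega, ?_⟩⟩, by omega⟩
        · rw [hnegleg x.2 hv.1 hv.2.1]; exact hv.2.2
        · rw [hnegleg x.1 hu.1 hu.2.1]; exact hu.2.2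
      · intro x hx
        simp only [hPQdef, Finset.mem_filter, Finset.mem_product] at hx
        obtain ⟨⟨hu, hv⟩, hlt⟩ := hx
        rw [hQmem] at hu hv
        simp only [hPSdef, Finset.mem_filter, Finset.mem_product]
        rw [hSmem, hSmem]
        refine ⟨⟨⟨⟨by omega, by omega, ?_⟩, ⟨by omega, by omega, ?_⟩⟩, by omega⟩, by omega⟩
        · rw [hnegleg x.2 (by omega) (by omega)]; exact hv.2.2
        · rw [hnegleg x.1 (by omega) (by omega)]; exact hu.2.2
      · rintro ⟨x1, x2⟩ hx
        simp only [hPSdef, Finset.mem_filter, Finset.mem_product] at hx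
        obtain ⟨⟨⟨hu, hv⟩, hlt⟩, hbig⟩ := hx
        rw [hSmem] at hu hv
        simp only [Prod.mk.injEq]
        constructor <;> first | trivial | omega
      · rintro ⟨x1, x2⟩ hx
        simp only [hPQdef, Finset.mem_filter, Finset.mem_product] at hx
        obtain ⟨⟨hu, hv⟩, hlt⟩ := hx
        rw [hQmem] at hu hv
        simp only [Prod.mk.injEq]
        constructor <;> first | trivial | omega
      · intro x hx
        simp only [hPSdef, Finset.mem_filter, Finset.mem_product] at hx
        obtain ⟨⟨⟨hu, hv⟩, hlt⟩, hbig⟩ := hx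
        rw [hSmem] at hu hv
        have c1 : ((p - x.1 : ℕ) : ℤ) = (p : ℤ) - x.1 := by
          push_cast [Nat.cast_sub (by omega : x.1 ≤ p)]; ring
        have c2 : ((p - x.2 : ℕ) : ℤ) = (p : ℤ) - x.2 := by
          push_cast [Nat.cast_sub (by omega : x.2 ≤ p)]; ring
        simp only [c1, c2]
        ring
    have e3 : ∏ q ∈ (PS.filter (fun q : ℕ × ℕ => ¬ n < q.1)).filter
          (fun q : ℕ × ℕ => ¬ q.2 ≤ n), ((q.2 : ℤ) - (q.1 : ℤ)) =
        ∏ q ∈ Q ×ˢ Q, ((p : ℤ) - q.1 - q.2) := by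
      apply Finset.prod_nbij' (fun q : ℕ × ℕ => (q.1, p - q.2))
        (fun q : ℕ × ℕ => (q.1, p - q.2))
      · intro x hx
        simp only [hPSdef, Finset.mem_filter, Finset.mem_product] at hx
        obtain ⟨⟨⟨⟨hu, hv⟩, hlt⟩, hsm⟩, hbig⟩ := hx
        rw [hSmem] at hu hv
        simp only [Finset.mem_product]
        rw [hQmem, hQmem]
        refine ⟨⟨by omega, by omega, hu.2.2⟩, ⟨by omega, by omega, ?_⟩⟩
        rw [hnegleg x.2 hv.1 hv.2.1]; exact hv.2.2
      · intro x hx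
        simp only [Finset.mem_product] at hx
        obtain ⟨hu, hv⟩ := hx
        rw [hQmem] at hu hv
        simp only [hPSdef, Finset.mem_filter, Finset.mem_product]
        rw [hSmem, hSmem]
        refine ⟨⟨⟨⟨⟨by omega, by omega, hu.2.2⟩, ⟨by omega, by omega, ?_⟩⟩, by omega⟩,
          by omega⟩, by omega⟩
        rw [hnegleg x.2 (by omega) (by omega)]; exact hv.2.2
      · rintro ⟨x1, x2⟩ hx
        simp only [hPSdef, Finset.mem_filter, Finset.mem_product] at hx
        obtain ⟨⟨⟨⟨hu, hv⟩, hlt⟩, hsm⟩, hbig⟩ := hx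
        rw [hSmem] at hu hv
        simp only [Prod.mk.injEq]
        constructor <;> first | trivial | omega
      · rintro ⟨x1, x2⟩ hx
        simp only [Finset.mem_product] at hx
        obtain ⟨hu, hv⟩ := hx
        rw [hQmem] at hu hv
        simp only [Prod.mk.injEq]
        constructor <;> first | trivial | omega
      · intro x hx
        simp only [hPSdef, Finset.mem_filter, Finset.mem_product] at hx
        obtain ⟨⟨⟨⟨hu, hv⟩, hlt⟩, hsm⟩, hbig⟩ := hx
        rw [hSmem] at hu hv
        have c2 : ((p - x.2 : ℕ) : ℤ) = (p : ℤ) - x.2 := by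
          push_cast [Nat.cast_sub (by omega : x.2 ≤ p)]; ring
        simp only [c2]
        ring
    rw [hEcast]
    rw [← h1, e1, ← h2, e2, e3]
    ring
  -- step C : X to Y in ZMod p
  have hX : (∏ q ∈ Q ×ˢ Q, (((q.1 + q.2 : ℕ)) : ZMod p)) =
      (-1)^((Q ×ˢ Q).card - F1.card) * ((Y : ℕ) : ZMod p) := by
    have hbound : ∀ q : ℕ × ℕ, q ∈ Q ×ˢ Q → 1 ≤ q.1 + q.2 ∧ q.1 + q.2 ≤ 2 * n := by
      intro q hq
      rw [Finset.mem_product] at hq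
      have h1 := (hQmem q.1).1 hq.1
      have h2 := (hQmem q.2).1 hq.2
      omega
    rw [hYdef]
    rw [← Finset.prod_filter_mul_prod_filter_not (Q ×ˢ Q) (fun q : ℕ × ℕ => q.1 + q.2 ≤ n)
      (fun q : ℕ × ℕ => (((q.1 + q.2 : ℕ)) : ZMod p))]
    rw [← Finset.prod_filter_mul_prod_filter_not (Q ×ˢ Q) (fun q : ℕ × ℕ => q.1 + q.2 ≤ n)
      (fun q : ℕ × ℕ => fold (q.1 + q.2))]
    have e1 : ∏ q ∈ (Q ×ˢ Q).filter (fun q : ℕ × ℕ => q.1 + q.2 ≤ n),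
        (((q.1 + q.2 : ℕ)) : ZMod p) =
        ∏ q ∈ (Q ×ˢ Q).filter (fun q : ℕ × ℕ => q.1 + q.2 ≤ n),
          ((fold (q.1 + q.2) : ℕ) : ZMod p) := by
      refine Finset.prod_congr rfl (fun q hq => ?_)
      rw [hfold_low _ (Finset.mem_filter.1 hq).2]
    have e2 : ∏ q ∈ (Q ×ˢ Q).filter (fun q : ℕ × ℕ => ¬ q.1 + q.2 ≤ n),
        (((q.1 + q.2 : ℕ)) : ZMod p) =
        (-1)^(((Q ×ˢ Q).filter (fun q : ℕ × ℕ => ¬ q.1 + q.2 ≤ n)).card) *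
        ∏ q ∈ (Q ×ˢ Q).filter (fun q : ℕ × ℕ => ¬ q.1 + q.2 ≤ n),
          ((fold (q.1 + q.2) : ℕ) : ZMod p) := by
      rw [← Finset.prod_const, ← Finset.prod_mul_distrib]
      refine Finset.prod_congr rfl (fun q hq => ?_)
      rw [Finset.mem_filter] at hq
      have hb := hbound q hq.1
      have hgt : ¬ q.1 + q.2 ≤ n := hq.2
      rw [hfold_mid _ (by omega) (by omega), Nat.cast_sub (by omega : q.1 + q.2 ≤ p),
        ZMod.natCast_self]
      ring
    rw [e1, e2]
    have hcards : F1.card +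
        ((Q ×ˢ Q).filter (fun q : ℕ × ℕ => ¬ q.1 + q.2 ≤ n)).card = (Q ×ˢ Q).card := by
      rw [hF1def]
      exact Finset.card_filter_add_card_filter_not _
    rw [show (Q ×ˢ Q).card - F1.card =
      ((Q ×ˢ Q).filter (fun q : ℕ × ℕ => ¬ q.1 + q.2 ≤ n)).card by omega]
    push_cast
    ring
  -- step D : E^2 * Y = prod over B0
  have hE2Y : E^2 * Y = ∏ q ∈ B0, fold (q.1 + q.2) := by
    rw [hEdef, hYdef]
    rw [← Finset.prod_filter_mul_prod_filter_not B0 (fun q : ℕ × ℕ => q.2 ≤ n)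
      (fun q : ℕ × ℕ => fold (q.1 + q.2))]
    have e1 : B0.filter (fun q : ℕ × ℕ => q.2 ≤ n) = Q ×ˢ Q := by
      ext x
      simp only [hB0def, Finset.mem_filter, Finset.mem_product]
      rw [hSmem x.2, hQmem x.1, hQmem x.2]
      constructor
      · intro h
        exact ⟨h.1.1.1, ⟨h.1.1.2.1, h.2, h.1.1.2.2.2⟩⟩
      · intro h
        have h1 := h.1
        have h2 := h.2
        exact ⟨⟨⟨h1, ⟨h2.1, by omega, h2.2.2⟩⟩, by omega⟩, h2.2.1⟩
    have e2 : ∏ q ∈ B0.filter (fun q : ℕ × ℕ => ¬ q.2 ≤ n), fold (q.1 + q.2) =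
        (∏ q ∈ PQ, (q.2 - q.1))^2 := by
      set OD := (Q ×ˢ Q).filter (fun q : ℕ × ℕ => ¬ q.1 = q.2) with hODdef
      have step1 : ∏ q ∈ B0.filter (fun q : ℕ × ℕ => ¬ q.2 ≤ n), fold (q.1 + q.2) =
          ∏ q ∈ OD, (if q.2 < q.1 then q.1 - q.2 else q.2 - q.1) := by
        apply Finset.prod_nbij' (fun q : ℕ × ℕ => (q.1, p - q.2))
          (fun q : ℕ × ℕ => (q.1, p - q.2))
        · intro x hx
          simp only [hB0def, Finset.mem_filter, Finset.mem_product] at hx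
          obtain ⟨⟨⟨hu, hv⟩, hne⟩, hbig⟩ := hx
          rw [hQmem] at hu; rw [hSmem] at hv
          simp only [hODdef, Finset.mem_filter, Finset.mem_product]
          rw [hQmem, hQmem]
          refine ⟨⟨hu, ⟨by omega, by omega, ?_⟩⟩, by omega⟩
          rw [hnegleg x.2 hv.1 hv.2.1]; exact hv.2.2
        · intro x hx
          simp only [hODdef, Finset.mem_filter, Finset.mem_product] at hx
          obtain ⟨⟨hu, hv⟩, hne⟩ := hx
          rw [hQmem] at hu hv
          simp only [hB0def, Finset.mem_filter, Finset.mem_product]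
          rw [hQmem, hSmem]
          refine ⟨⟨⟨hu, ⟨by omega, by omega, ?_⟩⟩, by omega⟩, by omega⟩
          rw [hnegleg x.2 (by omega) (by omega)]; exact hv.2.2
        · rintro ⟨x1, x2⟩ hx
          simp only [hB0def, Finset.mem_filter, Finset.mem_product] at hx
          obtain ⟨⟨⟨hu, hv⟩, hne⟩, hbig⟩ := hx
          rw [hQmem] at hu; rw [hSmem] at hv
          simp only [Prod.mk.injEq]
          constructor <;> first | trivial | omega
        · rintro ⟨x1, x2⟩ hx
          simp only [hODdef, Finset.mem_filter, Finset.mem_product] at hx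
          obtain ⟨⟨hu, hv⟩, hne⟩ := hx
          rw [hQmem] at hu hv
          simp only [Prod.mk.injEq]
          constructor <;> first | trivial | omega
        · intro x hx
          simp only [hB0def, Finset.mem_filter, Finset.mem_product] at hx
          obtain ⟨⟨⟨hu, hv⟩, hne⟩, hbig⟩ := hx
          rw [hQmem] at hu; rw [hSmem] at hv
          simp only
          by_cases hc : p - x.2 < x.1
          · rw [if_pos hc, hfold_hi _ (by omega) (by omega)]; omega
          · rw [if_neg hc, hfold_mid _ (by omega) (by omega)]; omega
      rw [step1]
      rw [← Finset.prod_filter_mul_prod_filter_not OD (fun q : ℕ × ℕ => q.2 < q.1)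
        (fun q : ℕ × ℕ => if q.2 < q.1 then q.1 - q.2 else q.2 - q.1)]
      have e3 : ∏ q ∈ OD.filter (fun q : ℕ × ℕ => q.2 < q.1),
          (if q.2 < q.1 then q.1 - q.2 else q.2 - q.1) = ∏ q ∈ PQ, (q.2 - q.1) := by
        apply Finset.prod_nbij' (fun q : ℕ × ℕ => (q.2, q.1)) (fun q : ℕ × ℕ => (q.2, q.1))
        · intro x hx
          simp only [hODdef, Finset.mem_filter, Finset.mem_product] at hx
          simp only [hPQdef, Finset.mem_filter, Finset.mem_product]
          exact ⟨⟨hx.1.1.2, hx.1.1.1⟩, hx.2⟩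
        · intro x hx
          simp only [hPQdef, Finset.mem_filter, Finset.mem_product] at hx
          simp only [hODdef, Finset.mem_filter, Finset.mem_product]
          exact ⟨⟨⟨hx.1.2, hx.1.1⟩, by omega⟩, hx.2⟩
        · intro x hx; rfl
        · intro x hx; rfl
        · intro x hx
          simp only [hODdef, Finset.mem_filter, Finset.mem_product] at hx
          rw [if_pos hx.2]
      have e4 : ∏ q ∈ OD.filter (fun q : ℕ × ℕ => ¬ q.2 < q.1),
          (if q.2 < q.1 then q.1 - q.2 else q.2 - q.1) = ∏ q ∈ PQ, (q.2 - q.1) := by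
        have hset : OD.filter (fun q : ℕ × ℕ => ¬ q.2 < q.1) = PQ := by
          ext x
          simp only [hODdef, hPQdef, Finset.mem_filter, Finset.mem_product]
          constructor
          · intro h
            exact ⟨h.1.1, by omega⟩
          · intro h
            exact ⟨⟨h.1, by omega⟩, by omega⟩
        rw [hset]
        refine Finset.prod_congr rfl (fun q hq => ?_)
        rw [if_neg (by simp only [hPQdef, Finset.mem_filter] at hq; omega)]
      rw [e3, e4]
      ring
    rw [e1, e2]
    ring
  -- step E : the fiberwise count
  have hfib : ∏ q ∈ B0, fold (q.1 + q.2) = q0^(m-1) * s0^m := by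
    rw [hq0def, hs0def]
    have hB0elt : ∀ q : ℕ × ℕ, q ∈ B0 → 1 ≤ q.1 ∧ q.1 ≤ n ∧ 1 ≤ q.2 ∧ q.2 ≤ p - 1 ∧
        q.1 + q.2 ≠ p ∧ legendreSym p (q.1:ℤ) = 1 ∧ legendreSym p (q.2:ℤ) = 1 := by
      intro q hq
      simp only [hB0def, Finset.mem_filter, Finset.mem_product] at hq
      obtain ⟨⟨h1, h2⟩, h3⟩ := hq
      rw [hQmem] at h1; rw [hSmem] at h2
      exact ⟨h1.1, h1.2.1, h2.1, h2.2.1, h3, h1.2.2, h2.2.2⟩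
    have hmaps : ∀ q ∈ B0, fold (q.1 + q.2) ∈ Finset.Icc 1 n := by
      intro q hq
      obtain ⟨h1, h2, h3, h4, h5, -, -⟩ := hB0elt q hq
      rw [Finset.mem_Icc]
      rcases Nat.lt_or_ge (q.1 + q.2) p with hlt | hge
      · rcases le_or_gt (q.1 + q.2) n with hle | hgt
        · rw [hfold_low _ hle]; omega
        · rw [hfold_mid _ hgt hlt]; omega
      · rw [hfold_hi _ (by omega) (by omega)]; omega
    rw [← Finset.prod_fiberwise_of_maps_to hmaps (fun q : ℕ × ℕ => fold (q.1 + q.2))]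
    have hinner : ∀ c ∈ Finset.Icc 1 n,
        ∏ q ∈ B0.filter (fun q : ℕ × ℕ => fold (q.1 + q.2) = c), fold (q.1 + q.2) =
        c ^ (B0.filter (fun q : ℕ × ℕ => fold (q.1 + q.2) = c)).card := by
      intro c _
      rw [← Finset.prod_const]
      exact Finset.prod_congr rfl (fun q hq => (Finset.mem_filter.1 hq).2)
    rw [Finset.prod_congr rfl hinner]
    have hcard1 : ∀ c, 1 ≤ c → c ≤ n →
        (B0.filter (fun q : ℕ × ℕ => fold (q.1 + q.2) = c)).card =
        ((S ×ˢ S).filter (fun q : ℕ × ℕ => (q.1 + q.2) % p = c)).card := by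
      intro c hc1 hc2
      apply Finset.card_nbij'
        (i := fun q : ℕ × ℕ => if (q.1 + q.2) % p = c then q else (p - q.1, p - q.2))
        (j := fun q : ℕ × ℕ => if q.1 ≤ n then q else (p - q.1, p - q.2))
      · intro q hq
        simp only [Finset.mem_coe] at hq ⊢
        have hmem := (Finset.mem_filter.1 hq).1
        have hfq := (Finset.mem_filter.1 hq).2
        obtain ⟨h1, h2, h3, h4, h5, h6, h7⟩ := hB0elt q hmem
        have hQS1 : q.1 ∈ S := by rw [hSmem]; exact ⟨h1, by omega, h6⟩
        have hQS2 : q.2 ∈ S := by rw [hSmem]; exact ⟨h3, h4, h7⟩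
        rcases Nat.lt_or_ge (q.1 + q.2) p with hlt | hge
        · rcases le_or_gt (q.1 + q.2) n with hle | hgt
          · rw [hfold_low _ hle] at hfq
            have hmod : (q.1 + q.2) % p = c := by
              rw [Nat.mod_eq_of_lt (by omega)]; exact hfq
            rw [if_pos hmod, Finset.mem_filter, Finset.mem_product]
            exact ⟨⟨hQS1, hQS2⟩, hmod⟩
          · rw [hfold_mid _ hgt hlt] at hfq
            have hmod : (q.1 + q.2) % p = p - c := by
              rw [Nat.mod_eq_of_lt (by omega)]; omega
            rw [if_neg (by omega : ¬ (q.1 + q.2) % p = c)]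
            rw [Finset.mem_filter, Finset.mem_product]
            refine ⟨⟨?_, ?_⟩, ?_⟩
            · rw [hSmem]
              exact ⟨by omega, by omega, by rw [hnegleg q.1 h1 (by omega)]; exact h6⟩
            · rw [hSmem]
              exact ⟨by omega, by omega, by rw [hnegleg q.2 h3 h4]; exact h7⟩
            · have hrw : (p - q.1) + (p - q.2) = 2 * p - (q.1 + q.2) := by omega
              rw [hrw]
              have h2p : 2 * p - (q.1 + q.2) = p + c := by omega
              rw [h2p, Nat.add_mod_left, Nat.mod_eq_of_lt (by omega)]
        · rw [hfold_hi _ (by omega) (by omega)] at hfq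
          have hmod : (q.1 + q.2) % p = c := by
            rw [Nat.mod_eq_sub_mod (by omega), Nat.mod_eq_of_lt (by omega)]; exact hfq
          rw [if_pos hmod, Finset.mem_filter, Finset.mem_product]
          exact ⟨⟨hQS1, hQS2⟩, hmod⟩
      · intro q hq
        simp only [Finset.mem_coe] at hq ⊢
        rw [Finset.mem_filter, Finset.mem_product] at hq
        obtain ⟨⟨h1, h2⟩, h3⟩ := hq
        rw [hSmem] at h1 h2
        have hsum : q.1 + q.2 = c ∨ q.1 + q.2 = p + c := by
          rcases Nat.lt_or_ge (q.1 + q.2) p with hlt | hge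
          · left; rw [Nat.mod_eq_of_lt hlt] at h3; omega
          · right
            rw [Nat.mod_eq_sub_mod (by omega), Nat.mod_eq_of_lt (by omega)] at h3; omega
        by_cases hcase : q.1 ≤ n
        · rw [if_pos hcase, Finset.mem_filter]
          constructor
          · simp only [hB0def, Finset.mem_filter, Finset.mem_product]
            refine ⟨⟨?_, ?_⟩, ?_⟩
            · rw [hQmem]; exact ⟨h1.1, hcase, h1.2.2⟩
            · rw [hSmem]; exact h2
            · omega
          · rcases hsum with hs | hs
            · rw [hs, hfold_low _ (by omega)]
            · rw [hs, hfold_hi _ (by omega) (by omega)]; omega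
        · rw [if_neg hcase, Finset.mem_filter]
          have hs : q.1 + q.2 = p + c := by
            rcases hsum with hs | hs
            · omega
            · exact hs
          constructor
          · simp only [hB0def, Finset.mem_filter, Finset.mem_product]
            refine ⟨⟨?_, ?_⟩, ?_⟩
            · rw [hQmem]
              exact ⟨by omega, by omega, by rw [hnegleg q.1 h1.1 h1.2.1]; exact h1.2.2⟩
            · rw [hSmem]
              exact ⟨by omega, by omega, by rw [hnegleg q.2 h2.1 h2.2.1]; exact h2.2.2⟩
            · omega
          · have hrw : (p - q.1) + (p - q.2) = p - c := by omega
            rw [hrw, hfold_mid _ (by omega) (by omega)]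
            omega
      · rintro ⟨u, v⟩ hq
        simp only [Finset.mem_coe] at hq ⊢
        have hmem := (Finset.mem_filter.1 hq).1
        obtain ⟨h1, h2, h3, h4, h5, -, -⟩ := hB0elt _ hmem
        by_cases hcase : (u + v) % p = c
        · rw [if_pos hcase, if_pos (by exact h2)]
        · rw [if_neg hcase]
          rw [if_neg (by simp only; omega)]
          simp only [Prod.mk.injEq]
          constructor <;> omega
      · rintro ⟨u, v⟩ hq
        simp only [Finset.mem_coe] at hq ⊢
        rw [Finset.mem_filter, Finset.mem_product] at hq
        obtain ⟨⟨h1, h2⟩, h3⟩ := hq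
        rw [hSmem] at h1 h2
        by_cases hcase : u ≤ n
        · rw [if_pos hcase, if_pos h3]
        · rw [if_neg hcase]
          have hsum : u + v = p + c := by
            rcases Nat.lt_or_ge (u + v) p with hlt | hge
            · rw [Nat.mod_eq_of_lt hlt] at h3; omega
            · rw [Nat.mod_eq_sub_mod (by omega), Nat.mod_eq_of_lt (by omega)] at h3; omega
          have hmod2 : ((p - u) + (p - v)) % p = p - c := by
            have hrw : (p - u) + (p - v) = p - c := by omega
            rw [hrw, Nat.mod_eq_of_lt (by omega)]
          rw [if_neg (by simp only; omega)]
          simp only [Prod.mk.injEq]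
          constructor <;> omega
    have hcard2 : ∀ c : ℕ, 1 ≤ c → c ≤ n →
        (((S ×ˢ S).filter (fun q : ℕ × ℕ => (q.1 + q.2) % p = c)).card : ℤ) =
        ((Finset.univ.filter (fun x : ZMod p =>
          x ≠ 0 ∧ IsSquare x ∧ (c : ZMod p) - x ≠ 0 ∧
            IsSquare ((c : ZMod p) - x))).card : ℤ) := by
      intro c hc1 hc2
      congr 1
      apply Finset.card_nbij' (i := fun q : ℕ × ℕ => ((q.1 : ZMod p)))
        (j := fun x : ZMod p => (x.val, ((c : ZMod p) - x).val))
      · intro q hq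
        simp only [Finset.mem_coe] at hq ⊢
        rw [Finset.mem_filter, Finset.mem_product] at hq
        obtain ⟨⟨h1, h2⟩, h3⟩ := hq
        rw [hSmem] at h1 h2
        have hv1 : ((q.1 : ZMod p)) ≠ 0 := by
          rw [Ne, ZMod.natCast_eq_zero_iff]
          intro hdvd
          have := Nat.le_of_dvd (by omega) hdvd
          omega
        have hv2 : ((q.2 : ZMod p)) ≠ 0 := by
          rw [Ne, ZMod.natCast_eq_zero_iff]
          intro hdvd
          have := Nat.le_of_dvd (by omega) hdvd
          omega
        have hsq1 : IsSquare ((q.1 : ZMod p)) := by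
          have := (legendreSym.eq_one_iff p (a := (q.1 : ℤ)) (by push_cast; exact hv1)).1
            h1.2.2
          push_cast at this
          exact this
        have hsq2 : IsSquare ((q.2 : ZMod p)) := by
          have := (legendreSym.eq_one_iff p (a := (q.2 : ℤ)) (by push_cast; exact hv2)).1
            h2.2.2
          push_cast at this
          exact this
        have hdiff : (c : ZMod p) - (q.1 : ZMod p) = (q.2 : ZMod p) := by
          have hmm : (((q.1 + q.2) % p : ℕ) : ZMod p) = ((q.1 + q.2 : ℕ) : ZMod p) :=
            ZMod.natCast_mod _ _
          rw [h3] at hmm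
          push_cast at hmm
          linear_combination hmm
        rw [Finset.mem_filter]
        refine ⟨Finset.mem_univ _, hv1, hsq1, ?_, ?_⟩
        · rw [hdiff]; exact hv2
        · rw [hdiff]; exact hsq2
      · intro x hx
        simp only [Finset.mem_coe] at hx ⊢
        rw [Finset.mem_filter] at hx
        obtain ⟨-, hx1, hx2, hx3, hx4⟩ := hx
        have hval1 : (x.val : ZMod p) = x := ZMod.natCast_rightInverse x
        have hval2 : ((((c : ZMod p) - x).val : ℕ) : ZMod p) = (c : ZMod p) - x :=
          ZMod.natCast_rightInverse _
        rw [Finset.mem_filter, Finset.mem_product]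
        refine ⟨⟨?_, ?_⟩, ?_⟩
        · rw [hSmem]
          refine ⟨?_, ?_, ?_⟩
          · have : x.val ≠ 0 := fun h => hx1 (by rw [← hval1, h]; simp)
            omega
          · have := ZMod.val_lt x; omega
          · rw [legendreSym.eq_one_iff p (by push_cast; rw [hval1]; exact hx1)]
            push_cast
            rw [hval1]
            exact hx2
        · rw [hSmem]
          refine ⟨?_, ?_, ?_⟩
          · have : ((c : ZMod p) - x).val ≠ 0 := fun h => hx3 (by rw [← hval2, h]; simp)
            omega
          · have := ZMod.val_lt ((c : ZMod p) - x); omega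
          · rw [legendreSym.eq_one_iff p (by push_cast; rw [hval2]; exact hx3)]
            push_cast
            rw [hval2]
            exact hx4
        · have hkey : ((x.val + ((c : ZMod p) - x).val : ℕ) : ZMod p) = (c : ZMod p) := by
            push_cast
            rw [hval1, hval2]
            ring
          show (x.val + ((c : ZMod p) - x).val) % p = c
          have h := (ZMod.natCast_eq_natCast_iff _ _ _).1 hkey
          unfold Nat.ModEq at h
          have hcp : c % p = c := Nat.mod_eq_of_lt (by omega)
          rw [hcp] at h
          exact h
      · rintro ⟨u, v⟩ hq
        simp only [Finset.mem_coe] at hq ⊢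
        rw [Finset.mem_filter, Finset.mem_product] at hq
        obtain ⟨⟨h1, h2⟩, h3⟩ := hq
        rw [hSmem] at h1 h2
        have hdiff : (c : ZMod p) - (u : ZMod p) = (v : ZMod p) := by
          have hmm : (((u + v) % p : ℕ) : ZMod p) = ((u + v : ℕ) : ZMod p) :=
            ZMod.natCast_mod _ _
          rw [h3] at hmm
          push_cast at hmm
          linear_combination hmm
        simp only [Prod.mk.injEq, hdiff]
        rw [ZMod.val_natCast, ZMod.val_natCast]
        constructor
        · exact Nat.mod_eq_of_lt (by omega)
        · exact Nat.mod_eq_of_lt (by omega)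
      · intro x hx
        exact ZMod.natCast_rightInverse x
    have hcard3 : ∀ c, 1 ≤ c → c ≤ n →
        (B0.filter (fun q : ℕ × ℕ => fold (q.1 + q.2) = c)).card =
        if legendreSym p (c : ℤ) = 1 then m - 1 else m := by
      intro c hc1 hc2
      have hγ : (c : ZMod p) ≠ 0 := by
        rw [Ne, ZMod.natCast_eq_zero_iff]
        intro hdvd
        have := Nat.le_of_dvd (by omega) hdvd
        omega
      have hcb := countB17 p hp4 (c : ZMod p) hγ
      have hqc : quadraticChar (ZMod p) ((c : ZMod p)) = legendreSym p (c : ℤ) := by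
        rw [hQC]
        norm_cast
      rw [hqc] at hcb
      have heq := hcard1 c hc1 hc2
      have heq2 := hcard2 c hc1 hc2
      rcases quadraticChar_dichotomy (F := ZMod p) hγ with hd | hd <;> rw [hqc] at hd
      · rw [if_pos hd]
        rw [hd] at hcb
        have hp4m : (p : ℤ) = 4 * m + 1 := by push_cast; omega
        rw [heq]
        have hfin : (((S ×ˢ S).filter
            (fun q : ℕ × ℕ => (q.1 + q.2) % p = c)).card : ℤ) = m - 1 := by
          rw [heq2]; omega
        omega
      · rw [if_neg (by rw [hd]; norm_num)]
        rw [hd] at hcb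
        have hp4m : (p : ℤ) = 4 * m + 1 := by push_cast; omega
        rw [heq]
        have hfin : (((S ×ˢ S).filter
            (fun q : ℕ × ℕ => (q.1 + q.2) % p = c)).card : ℤ) = m := by
          rw [heq2]; omega
        omega
    have hcongr : ∀ c ∈ Finset.Icc 1 n,
        c ^ (B0.filter (fun q : ℕ × ℕ => fold (q.1 + q.2) = c)).card =
        c ^ (if legendreSym p (c : ℤ) = 1 then m - 1 else m) := by
      intro c hc
      rw [Finset.mem_Icc] at hc
      rw [hcard3 c hc.1 hc.2]
    rw [Finset.prod_congr rfl hcongr]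
    rw [← Finset.prod_filter_mul_prod_filter_not (Finset.Icc 1 n)
      (fun c : ℕ => legendreSym p (c : ℤ) = 1)
      (fun c : ℕ => c ^ (if legendreSym p (c : ℤ) = 1 then m - 1 else m))]
    have hq0s : (Finset.Icc 1 n).filter (fun c : ℕ => legendreSym p (c : ℤ) = 1) = Q :=
      hQdef.symm
    have hs0s : (Finset.Icc 1 n).filter (fun c : ℕ => ¬ legendreSym p (c : ℤ) = 1) =
        (Finset.Icc 1 n).filter (fun c : ℕ => legendreSym p (c : ℤ) = -1) := by
      ext k
      rw [Finset.mem_filter, Finset.mem_filter, Finset.mem_Icc]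
      constructor
      · rintro ⟨hk, hne⟩
        refine ⟨hk, ?_⟩
        have hγ : (k : ZMod p) ≠ 0 := by
          rw [Ne, ZMod.natCast_eq_zero_iff]
          intro hdvd
          have := Nat.le_of_dvd (by omega) hdvd
          omega
        have hqc : quadraticChar (ZMod p) ((k : ZMod p)) = legendreSym p (k : ℤ) := by
          rw [hQC]; norm_cast
        rcases quadraticChar_dichotomy (F := ZMod p) hγ with hd | hd <;> rw [hqc] at hd
        · exact absurd hd hne
        · exact hd
      · rintro ⟨hk, hne⟩
        exact ⟨hk, by rw [hne]; norm_num⟩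
    rw [hq0s, hs0s]
    have e1 : ∏ c ∈ Q, c ^ (if legendreSym p (c : ℤ) = 1 then m - 1 else m) =
        (∏ k ∈ Q, k) ^ (m - 1) := by
      rw [← Finset.prod_pow]
      refine Finset.prod_congr rfl (fun c hc => ?_)
      rw [if_pos ((hQmem c).1 hc).2.2]
    have e2 : ∏ c ∈ (Finset.Icc 1 n).filter (fun c : ℕ => legendreSym p (c : ℤ) = -1),
        c ^ (if legendreSym p (c : ℤ) = 1 then m - 1 else m) =
        (∏ k ∈ (Finset.Icc 1 n).filter
          (fun k : ℕ => legendreSym p (k : ℤ) = -1), k) ^ m := by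
      rw [← Finset.prod_pow]
      refine Finset.prod_congr rfl (fun c hc => ?_)
      rw [Finset.mem_filter] at hc
      rw [if_neg (by rw [hc.2]; norm_num)]
    rw [e1, e2]
  -- final assembly
  have hr' : ((Finset.Icc 1 n ×ˢ Finset.Icc 1 n).filter
      (fun q : ℕ × ℕ => q.1 + q.2 ≤ n ∧
        legendreSym p (q.1 : ℤ) = 1 ∧ legendreSym p (q.2 : ℤ) = 1)) = F1 := by
    ext x
    simp only [hF1def, Finset.mem_filter, Finset.mem_product, Finset.mem_Icc]
    rw [hQmem x.1, hQmem x.2]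
    constructor
    · intro h
      exact ⟨⟨⟨h.1.1.1, h.1.1.2, h.2.2.1⟩, ⟨h.1.2.1, h.1.2.2, h.2.2.2⟩⟩, h.2.1⟩
    · intro h
      exact ⟨⟨⟨h.1.1.1, h.1.1.2.1⟩, ⟨h.1.2.1, h.1.2.2.1⟩⟩, h.2, h.1.1.2.2, h.1.2.2.2⟩
  have hnoteq : (Finset.Icc 1 n).filter (fun c : ℕ => ¬ legendreSym p (c : ℤ) = 1) =
      (Finset.Icc 1 n).filter (fun c : ℕ => legendreSym p (c : ℤ) = -1) := by
    ext k
    rw [Finset.mem_filter, Finset.mem_filter, Finset.mem_Icc]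
    constructor
    · rintro ⟨hk, hne⟩
      refine ⟨hk, ?_⟩
      have hγ : (k : ZMod p) ≠ 0 := by
        rw [Ne, ZMod.natCast_eq_zero_iff]
        intro hdvd
        have := Nat.le_of_dvd (by omega) hdvd
        omega
      have hqc : quadraticChar (ZMod p) ((k : ZMod p)) = legendreSym p (k : ℤ) := by
        rw [hQC]; norm_cast
      rcases quadraticChar_dichotomy (F := ZMod p) hγ with hd | hd <;> rw [hqc] at hd
      · exact absurd hd hne
      · exact hd
    · rintro ⟨hk, hne⟩
      exact ⟨hk, by rw [hne]; norm_num⟩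
  have hfact : q0 * s0 = n.factorial := by
    rw [hq0def, hs0def]
    have hprodIcc : ∏ x ∈ Finset.Icc 1 n, x = n.factorial := by
      rw [← Finset.Ico_add_one_right_eq_Icc]
      exact Finset.prod_Ico_id_eq_factorial n
    rw [← hprodIcc]
    rw [← Finset.prod_filter_mul_prod_filter_not (Finset.Icc 1 n)
      (fun c : ℕ => legendreSym p (c : ℤ) = 1) (fun c : ℕ => c)]
    rw [hnoteq, ← hQdef]
  have hnat : q0^(m-1) * s0^m = n.factorial^((p-5)/4) * s0 := by
    have h45 : (p - 5) / 4 = m - 1 := by omega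
    have hspow : s0^m = s0^(m-1) * s0 := by
      rw [← pow_succ]
      congr 1
      omega
    rw [h45, hspow, ← hfact, mul_pow]
    ring
  have hrle : F1.card ≤ (Q ×ˢ Q).card := by
    rw [hF1def]
    exact Finset.card_filter_le _ _
  -- pass to ZMod p
  rw [← ZMod.intCast_eq_intCast_iff]
  rw [hLHS, hsplit, hr']
  have hcast1 : ((((E : ℤ))^2 * ∏ q ∈ Q ×ˢ Q, ((p : ℤ) - q.1 - q.2) : ℤ) : ZMod p) =
      ((E : ZMod p))^2 * ∏ q ∈ Q ×ˢ Q, (((p : ℕ) : ZMod p) - (q.1 : ZMod p)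
        - (q.2 : ZMod p)) := by
    push_cast
    ring
  rw [hcast1, ZMod.natCast_self]
  have hcast2 : ∏ q ∈ Q ×ˢ Q, ((0 : ZMod p) - (q.1 : ZMod p) - (q.2 : ZMod p)) =
      (-1)^((Q ×ˢ Q).card) * ∏ q ∈ Q ×ˢ Q, (((q.1 + q.2 : ℕ)) : ZMod p) := by
    rw [← Finset.prod_const, ← Finset.prod_mul_distrib]
    refine Finset.prod_congr rfl (fun q _ => ?_)
    push_cast
    ring
  rw [hcast2, hX]
  have hEY : ((E : ZMod p))^2 * ((Y : ℕ) : ZMod p) =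
      ((n.factorial : ZMod p))^((p-5)/4) * ((s0 : ℕ) : ZMod p) := by
    have hc : ((E^2 * Y : ℕ) : ZMod p) = ((n.factorial^((p-5)/4) * s0 : ℕ) : ZMod p) := by
      rw [hE2Y, hfib, hnat]
    push_cast at hc
    exact hc
  have hsign : ((-1 : ZMod p))^((Q ×ˢ Q).card) * (-1)^((Q ×ˢ Q).card - F1.card) =
      (-1)^(F1.card) := by
    rw [← pow_add]
    rw [show (Q ×ˢ Q).card + ((Q ×ˢ Q).card - F1.card) =
      2 * ((Q ×ˢ Q).card - F1.card) + F1.card by omega]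
    rw [pow_add, pow_mul]
    norm_num
  have hRHScast : (((-1 : ℤ) ^ F1.card * (n.factorial : ℤ) ^ ((p - 5) / 4) *
      ∏ k ∈ (Finset.Icc 1 n).filter (fun k : ℕ => legendreSym p (k : ℤ) = -1),
        (k : ℤ) : ℤ) : ZMod p) =
      (-1 : ZMod p)^(F1.card) * ((n.factorial : ZMod p))^((p-5)/4) *
        ((s0 : ℕ) : ZMod p) := by
    rw [hs0def]
    push_cast
    ring
  rw [hRHScast]
  calc ((E : ZMod p))^2 * ((-1 : ZMod p)^((Q ×ˢ Q).card) *
        ((-1 : ZMod p)^((Q ×ˢ Q).card - F1.card) * ((Y : ℕ) : ZMod p)))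
      = ((-1 : ZMod p)^((Q ×ˢ Q).card) * (-1)^((Q ×ˢ Q).card - F1.card)) *
        (((E : ZMod p))^2 * ((Y : ℕ) : ZMod p)) := by ring
    _ = (-1 : ZMod p)^(F1.card) * (((n.factorial : ZMod p))^((p-5)/4) *
        ((s0 : ℕ) : ZMod p)) := by rw [hsign, hEY]
    _ = (-1 : ZMod p)^(F1.card) * ((n.factorial : ZMod p))^((p-5)/4) *
        ((s0 : ℕ) : ZMod p) := by ring
end

section
/- Let p be an odd prime and a an integer coprime to p. Then the sign of the permutation of Z/pZ given by multiplication by a equals the Legendre symbol (a/p). -/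
open Equiv Equiv.Perm

section aux

variable (p : ℕ) [Fact p.Prime]

private def mySignHom : (ZMod p)ˣ →* ℤˣ :=
  Equiv.Perm.sign.comp (MulAction.toPermHom (ZMod p)ˣ (ZMod p))

private lemma sign_gen (hodd : Odd p) (g : (ZMod p)ˣ)
    (hg : ∀ x : (ZMod p)ˣ, x ∈ Subgroup.zpowers g) :
    mySignHom p g = -1 := by
  have hp : p.Prime := Fact.out
  have hp2 : 2 < p := hp.two_le.lt_of_ne (by rintro rfl; exact (Nat.not_odd_iff_even.mpr (by decide)) hodd)
  set σ : Equiv.Perm (ZMod p) := MulAction.toPermHom (ZMod p)ˣ (ZMod p) g with hσ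
  have hσx : ∀ x : ZMod p, σ x = (g : ZMod p) * x := fun x => rfl
  have hcard : Fintype.card (ZMod p)ˣ = p - 1 := ZMod.card_units_eq_totient p ▸ Nat.totient_prime hp
  have hg1 : g ≠ 1 := by
    intro h
    have : Fintype.card (ZMod p)ˣ ≤ 1 := by
      rw [Fintype.card_le_one_iff]
      intro a b
      obtain ⟨m, hm⟩ := hg a; obtain ⟨n, hn⟩ := hg b
      simp [← hm, ← hn, h]
    omega
  have hgne : (g : ZMod p) ≠ 1 := fun h => hg1 (Units.ext h)
  have hsup : σ.support = Finset.univ \ {0} := by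
    ext x
    simp only [Equiv.Perm.mem_support, hσx, Finset.mem_sdiff, Finset.mem_univ, true_and,
      Finset.mem_singleton]
    constructor
    · rintro h rfl; exact h (mul_zero _)
    · intro hx h
      exact hgne (mul_right_cancel₀ hx (by rw [h, one_mul]))
  have hcycle : σ.IsCycle := by
    refine ⟨1, ?_, ?_⟩
    · rw [hσx, mul_one]; exact hgne
    · intro y hy
      have hy0 : y ≠ 0 := by rintro rfl; exact hy (by rw [hσx, mul_zero])
      obtain ⟨u, rfl⟩ := Ne.isUnit hy0
      obtain ⟨n, hn⟩ := hg u
      refine ⟨n, ?_⟩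
      have h1 : σ ^ n = MulAction.toPermHom (ZMod p)ˣ (ZMod p) (g ^ n) := by rw [map_zpow]
      rw [h1]
      show ((g ^ n : (ZMod p)ˣ) : ZMod p) * 1 = u
      rw [mul_one]
      exact congrArg Units.val hn
  have hcardsup : σ.support.card = p - 1 := by
    rw [hsup, Finset.card_sdiff_of_subset (by simp), Finset.card_univ, ZMod.card, Finset.card_singleton]
  have heven : Even (p - 1) := by
    obtain ⟨k, hk⟩ := hodd; exact ⟨k, by omega⟩
  rw [mySignHom, MonoidHom.comp_apply, hcycle.sign, hcardsup, heven.neg_one_pow]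

private lemma mySignHom_eq (hodd : Odd p) (u : (ZMod p)ˣ) :
    ((mySignHom p u : ℤ)) = quadraticChar (ZMod p) (u : ZMod p) := by
  obtain ⟨g, hg0⟩ := IsCyclic.exists_monoid_generator (α := (ZMod p)ˣ)
  have hg : ∀ x : (ZMod p)ˣ, x ∈ Subgroup.zpowers g := by
    intro x
    obtain ⟨n, hn⟩ := hg0 x
    refine ⟨n, ?_⟩
    show g ^ (n : ℤ) = x
    rw [zpow_natCast]
    exact hn
  have hp : p.Prime := Fact.out
  have hp2 : 2 < p := hp.two_le.lt_of_ne (by rintro rfl; exact (Nat.not_odd_iff_even.mpr (by decide)) hodd)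
  have hcard : Fintype.card (ZMod p)ˣ = p - 1 := ZMod.card_units_eq_totient p ▸ Nat.totient_prime hp
  have hns : ¬ IsSquare ((g : ZMod p)) := by
    rintro ⟨b, hb⟩
    have hb0 : b ≠ 0 := by
      rintro rfl
      exact g.ne_zero (by simpa using hb)
    obtain ⟨v, rfl⟩ := Ne.isUnit hb0
    have hgv : g = v * v := Units.ext (by exact_mod_cast hb)
    have hord : orderOf g = p - 1 := by
      rw [orderOf_eq_card_of_forall_mem_zpowers hg, Nat.card_eq_fintype_card, hcard]
    have h2 : 2 * ((p - 1) / 2) = p - 1 := by obtain ⟨k, hk⟩ := hodd; omega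
    have hpow : g ^ ((p - 1) / 2) = 1 := by
      rw [hgv, ← sq, ← pow_mul, h2, ← hcard]
      exact pow_card_eq_one
    have hdvd := orderOf_dvd_of_pow_eq_one hpow
    rw [hord] at hdvd
    have := Nat.le_of_dvd (by omega) hdvd
    omega
  have hqg : quadraticChar (ZMod p) (g : ZMod p) = -1 :=
    quadraticChar_neg_one_iff_not_isSquare.mpr hns
  have hsg : mySignHom p g = -1 := sign_gen p hodd g hg
  obtain ⟨n, hn⟩ := hg0 u
  rw [← hn, map_pow, hsg, Units.val_pow_eq_pow_val, Units.val_pow_eq_pow_val, map_pow, hqg]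
  simp

end aux

theorem stmt_19 (p : ℕ) [Fact p.Prime] (hodd : Odd p) (a : ℤ) (ha : IsCoprime a (p : ℤ))
    (e : Equiv.Perm (ZMod p)) (he : ∀ x : ZMod p, e x = (a : ZMod p) * x) :
    ((Equiv.Perm.sign e : ℤ)) = legendreSym p a := by
  obtain ⟨x, y, hxy⟩ := ha
  have hunit : IsUnit ((a : ZMod p)) := by
    apply IsUnit.of_mul_eq_one ((x : ZMod p))
    have := congrArg (Int.cast : ℤ → ZMod p) hxy
    push_cast at this
    rw [ZMod.natCast_self, mul_zero, add_zero] at this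
    rw [mul_comm]; exact this
  obtain ⟨u, hu⟩ := hunit
  have he' : e = MulAction.toPermHom (ZMod p)ˣ (ZMod p) u := by
    ext z; rw [he, ← hu]; rfl
  have h1 : (Equiv.Perm.sign e : ℤ) = ((mySignHom p u : ℤ)) := by rw [he']; rfl
  rw [h1, mySignHom_eq p hodd u, hu, legendreSym]
end
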